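/- arXiv:1007.5032 — 2 statements merged into one kernel-verified Lean document; each statement's English description precedes it below -/
import Mathlib

section
/- Suppose the edge-weighted conflict graph has inductive independence number at most ρ ≥ 1 with respect to the ordering π, and let x be a fractional LP solution of the weighted LP with value b*. Then there exists a partly feasible allocation S with b(S) ≥ b*/(16·√k·ρ). (This is the existence form of the guarantee of the randomized LP-rounding algorithm for weighted conflict graphs, which outputs such an allocation in expectation.) -/
open Finset

/-- Symmetrized edge weights. -/
def wbar {n : ℕ} (w : Fin n → Fin n → ℝ) (u v : Fin n) : ℝ := w u v + w v u

/-- `M` is an independent set of the edge-weighted conflict graph `w`. -/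
def WIndep {n : ℕ} (w : Fin n → Fin n → ℝ) (M : Finset (Fin n)) : Prop :=
  ∀ v ∈ M, ∑ u ∈ M, w u v < 1

/-- The edge-weighted conflict graph `w` has inductive independence number at
most `ρ` with respect to the ordering `π`. -/
def WIndIndepAtMost {n : ℕ} (w : Fin n → Fin n → ℝ) (π : Equiv.Perm (Fin n))
    (ρ : ℝ) : Prop :=
  ∀ (v : Fin n) (M : Finset (Fin n)), (∀ u ∈ M, π u < π v) → WIndep w M →
    ∑ u ∈ M, wbar w u v ≤ ρ

/-- `x` is a fractional solution of the weighted LP. -/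
def WIsLPSol {n k : ℕ} (w : Fin n → Fin n → ℝ) (π : Equiv.Perm (Fin n)) (ρ : ℝ)
    (x : Fin n → Finset (Fin k) → ℝ) : Prop :=
  (∀ v T, 0 ≤ x v T) ∧
  (∀ (v : Fin n) (j : Fin k),
      ∑ u ∈ univ.filter (fun u => π u < π v),
        ∑ T ∈ univ.filter (fun T : Finset (Fin k) => j ∈ T),
          wbar w u v * x u T ≤ ρ) ∧
  (∀ v : Fin n, ∑ T : Finset (Fin k), x v T ≤ 1)

/-- `S` is a feasible allocation: for each channel `j`, the set of vertices
assigned channel `j` is an independent set of the weighted conflict graph. -/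
def WFeasibleAlloc {n k : ℕ} (w : Fin n → Fin n → ℝ)
    (S : Fin n → Finset (Fin k)) : Prop :=
  ∀ j : Fin k, WIndep w (univ.filter fun v => j ∈ S v)

/-- `S` is a partly feasible allocation. -/
def PartlyFeasible {n k : ℕ} (w : Fin n → Fin n → ℝ) (π : Equiv.Perm (Fin n))
    (S : Fin n → Finset (Fin k)) : Prop :=
  ∀ v : Fin n,
    ∑ u ∈ univ.filter (fun u => π u < π v ∧ (S u ∩ S v).Nonempty), wbar w u v
      < 1 / 2


lemma sum_prod_pi {n k : ℕ} (q : Fin n → Finset (Fin k) → ℝ) :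
    ∑ ω : Fin n → Finset (Fin k), ∏ v, q v (ω v) = ∏ v, ∑ T, q v T := by
  rw [Finset.prod_univ_sum, Fintype.piFinset_univ]

lemma marginal_one {n k : ℕ} (p : Fin n → Finset (Fin k) → ℝ)
    (hp1 : ∀ v, ∑ T, p v T = 1) (v : Fin n) (g : Finset (Fin k) → ℝ) :
    ∑ ω : Fin n → Finset (Fin k), (∏ w, p w (ω w)) * g (ω v)
      = ∑ T, p v T * g T := by
  have key : ∀ ω : Fin n → Finset (Fin k),
      (∏ w, p w (ω w)) * g (ω v)
        = ∏ w, (p w (ω w) * (if w = v then g (ω w) else 1)) := by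
    intro ω
    rw [Finset.prod_mul_distrib]
    congr 1
    rw [Finset.prod_ite_eq' univ v (fun w => g (ω w))]
    simp
  calc ∑ ω : Fin n → Finset (Fin k), (∏ w, p w (ω w)) * g (ω v)
      = ∑ ω : Fin n → Finset (Fin k), ∏ w, (p w (ω w) * (if w = v then g (ω w) else 1)) := by
        exact Finset.sum_congr rfl (fun ω _ => key ω)
    _ = ∏ w, ∑ T, p w T * (if w = v then g T else 1) := sum_prod_pi (fun w T => p w T * (if w = v then g T else 1))
    _ = ∑ T, p v T * g T := by
        rw [← Finset.prod_subset (Finset.subset_univ ({v} : Finset (Fin n)))]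
        · simp
        · intro u _ hu
          simp only [Finset.mem_singleton] at hu
          simp [hu, hp1 u]

lemma marginal_two {n k : ℕ} (p : Fin n → Finset (Fin k) → ℝ)
    (hp1 : ∀ v, ∑ T, p v T = 1) {u v : Fin n} (huv : u ≠ v)
    (g h : Finset (Fin k) → ℝ) :
    ∑ ω : Fin n → Finset (Fin k), (∏ w, p w (ω w)) * (g (ω u) * h (ω v))
      = (∑ T, p u T * g T) * (∑ T, p v T * h T) := by
  have key : ∀ ω : Fin n → Finset (Fin k),
      (∏ w, p w (ω w)) * (g (ω u) * h (ω v))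
        = ∏ w, (p w (ω w) * ((if w = u then g (ω w) else 1) *
            (if w = v then h (ω w) else 1))) := by
    intro ω
    rw [Finset.prod_mul_distrib, Finset.prod_mul_distrib]
    rw [Finset.prod_ite_eq' univ u (fun w => g (ω w)),
      Finset.prod_ite_eq' univ v (fun w => h (ω w))]
    simp
  calc ∑ ω : Fin n → Finset (Fin k), (∏ w, p w (ω w)) * (g (ω u) * h (ω v))
      = ∑ ω : Fin n → Finset (Fin k), ∏ w, (p w (ω w) * ((if w = u then g (ω w) else 1) *
            (if w = v then h (ω w) else 1))) := by
        exact Finset.sum_congr rfl (fun ω _ => key ω)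
    _ = ∏ w, ∑ T, p w T * ((if w = u then g T else 1) * (if w = v then h T else 1)) :=
        sum_prod_pi (fun w T => p w T * ((if w = u then g T else 1) * (if w = v then h T else 1)))
    _ = (∑ T, p u T * g T) * (∑ T, p v T * h T) := by
        rw [← Finset.prod_subset (Finset.subset_univ ({u, v} : Finset (Fin n)))]
        · rw [Finset.prod_pair huv]
          simp [huv, Ne.symm huv]
        · intro z _ hz
          simp only [Finset.mem_insert, Finset.mem_singleton, not_or] at hz
          simp [hz.1, hz.2, hp1 z]

lemma count_inter {k : ℕ} (c : Finset (Fin k) → ℝ) (hc : ∀ T', 0 ≤ c T')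
    (s : Finset (Finset (Fin k))) (T : Finset (Fin k)) :
    ∑ T' ∈ s.filter (fun T' => (T' ∩ T).Nonempty), c T'
      ≤ ∑ j ∈ T, ∑ T' ∈ univ.filter (fun T' : Finset (Fin k) => j ∈ T'), c T' := by
  have hR : ∑ j ∈ T, ∑ T' ∈ univ.filter (fun T' : Finset (Fin k) => j ∈ T'), c T'
      = ∑ T' : Finset (Fin k), ((T ∩ T').card : ℝ) * c T' := by
    simp_rw [Finset.sum_filter]
    rw [Finset.sum_comm]
    refine Finset.sum_congr rfl fun T' _ => ?_
    have : ∑ j ∈ T, (if j ∈ T' then c T' else 0) = ∑ j ∈ T.filter (· ∈ T'), c T' :=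
      (Finset.sum_filter _ _).symm
    rw [this, Finset.sum_const, Finset.filter_mem_eq_inter, nsmul_eq_mul]
  rw [hR]
  calc ∑ T' ∈ s.filter (fun T' => (T' ∩ T).Nonempty), c T'
      ≤ ∑ T' ∈ s.filter (fun T' => (T' ∩ T).Nonempty), ((T ∩ T').card : ℝ) * c T' := by
        refine Finset.sum_le_sum fun T' hT' => ?_
        have h1 : (T ∩ T').Nonempty := by
          rw [Finset.inter_comm]
          exact (Finset.mem_filter.mp hT').2
        have h2 : (1:ℝ) ≤ ((T ∩ T').card : ℝ) := by
          exact_mod_cast Finset.card_pos.mpr h1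
        nlinarith [hc T']
    _ ≤ ∑ T' : Finset (Fin k), ((T ∩ T').card : ℝ) * c T' := by
        refine Finset.sum_le_sum_of_subset_of_nonneg (Finset.subset_univ _)
          fun T' _ _ => mul_nonneg (by positivity) (hc T')

lemma dbl_count {k : ℕ} (c : Finset (Fin k) → ℝ) :
    ∑ j : Fin k, ∑ T' ∈ univ.filter (fun T' : Finset (Fin k) => j ∈ T'), c T'
      = ∑ T' : Finset (Fin k), ((T'.card : ℝ)) * c T' := by
  simp_rw [Finset.sum_filter]
  rw [Finset.sum_comm]
  refine Finset.sum_congr rfl fun T' _ => ?_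
  have : ∑ j : Fin k, (if j ∈ T' then c T' else 0) = ∑ j ∈ univ.filter (· ∈ T'), c T' :=
    (Finset.sum_filter _ _).symm
  rw [this, Finset.sum_const, Finset.filter_mem_eq_inter, Finset.univ_inter, nsmul_eq_mul]
lemma aux_round {n k : ℕ} (hk : 1 ≤ k)
    (w : Fin n → Fin n → ℝ) (hw : ∀ u v, 0 ≤ w u v)
    (π : Equiv.Perm (Fin n)) (ρ : ℝ) (hρ : 1 ≤ ρ)
    (b : Fin n → Finset (Fin k) → ℝ) (hb : ∀ v T, 0 ≤ b v T)
    (x : Fin n → Finset (Fin k) → ℝ) (hx0 : ∀ v T, 0 ≤ x v T)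
    (hx2 : ∀ v : Fin n, ∑ T : Finset (Fin k), x v T ≤ 1)
    (D : Finset (Finset (Fin k))) (hD : ∅ ∉ D)
    (hDb : ∀ (v : Fin n), ∀ T ∈ D,
      ∑ u ∈ univ.filter (fun u => π u < π v),
        wbar w u v * ∑ T' ∈ D.filter (fun T' => (T' ∩ T).Nonempty), x u T'
        ≤ Real.sqrt k * ρ) :
    ∃ S : Fin n → Finset (Fin k), PartlyFeasible w π S ∧
      (∑ v : Fin n, ∑ T ∈ D, b v T * x v T) / (8 * Real.sqrt k * ρ)
        ≤ ∑ v : Fin n, b v (S v) := by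
  classical
  have hwbar : ∀ u v, 0 ≤ wbar w u v := fun u v => add_nonneg (hw u v) (hw v u)
  set γ : ℝ := 4 * Real.sqrt k * ρ with hγdef
  have hsk : (1:ℝ) ≤ Real.sqrt k := by
    rw [show (1:ℝ) = Real.sqrt 1 by simp]
    exact Real.sqrt_le_sqrt (by exact_mod_cast hk)
  have hsk0 : (0:ℝ) < Real.sqrt k := by linarith
  have hγ4 : (4:ℝ) ≤ γ := by nlinarith
  have hγ0 : (0:ℝ) < γ := by linarith
  -- the probability weights
  set p : Fin n → Finset (Fin k) → ℝ :=
    fun v T => if T ∈ D then x v T / γ else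
      if T = ∅ then 1 - (∑ T' ∈ D, x v T') / γ else 0 with hpdef
  have hsumD : ∀ v, ∑ T' ∈ D, x v T' ≤ 1 := by
    intro v
    refine le_trans (Finset.sum_le_sum_of_subset_of_nonneg (Finset.subset_univ D)
      (fun T _ _ => hx0 v T)) (hx2 v)
  have hsumD0 : ∀ v, 0 ≤ ∑ T' ∈ D, x v T' :=
    fun v => Finset.sum_nonneg (fun T _ => hx0 v T)
  have hp0 : ∀ v T, 0 ≤ p v T := by
    intro v T
    by_cases h1 : T ∈ D
    · simp only [hpdef, h1, if_true]
      exact div_nonneg (hx0 v T) hγ0.le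
    · by_cases h2 : T = ∅
      · subst h2
        simp only [hpdef, hD, if_false, if_true]
        have h3 : (∑ T' ∈ D, x v T') / γ ≤ 1 := by
          rw [div_le_one hγ0]; linarith [hsumD v]
        linarith
      · simp [hpdef, h1, h2]
  have hp1 : ∀ v, ∑ T, p v T = 1 := by
    intro v
    rw [← Finset.sum_sdiff (Finset.subset_univ D)]
    have h1 : ∑ T ∈ D, p v T = (∑ T ∈ D, x v T) / γ := by
      rw [Finset.sum_div]
      exact Finset.sum_congr rfl (fun T hT => by simp [hpdef, hT])
    have h2 : ∑ T ∈ univ \ D, p v T = 1 - (∑ T ∈ D, x v T) / γ := by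
      have e : ∀ T ∈ univ \ D, p v T =
          if T = ∅ then 1 - (∑ T' ∈ D, x v T') / γ else 0 := by
        intro T hT
        simp [hpdef, (Finset.mem_sdiff.mp hT).2]
      rw [Finset.sum_congr rfl e,
        Finset.sum_ite_eq' (univ \ D) ∅ (fun _ => 1 - (∑ T' ∈ D, x v T') / γ)]
      simp [hD]
    rw [h1, h2]; ring
  set P : (Fin n → Finset (Fin k)) → ℝ := fun ω => ∏ v, p v (ω v) with hPdef
  have hP0 : ∀ ω, 0 ≤ P ω := fun ω => Finset.prod_nonneg (fun v _ => hp0 v (ω v))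
  have hPmass : ∑ ω : Fin n → Finset (Fin k), P ω = 1 := by
    rw [hPdef, sum_prod_pi p]
    exact Finset.prod_eq_one (fun v _ => hp1 v)
  set conf : Fin n → (Fin n → Finset (Fin k)) → ℝ :=
    fun v ω => ∑ u ∈ univ.filter (fun u => π u < π v ∧ (ω u ∩ ω v).Nonempty),
      wbar w u v with hconf
  set Sf : (Fin n → Finset (Fin k)) → Fin n → Finset (Fin k) :=
    fun ω v => if conf v ω < 1/2 then ω v else ∅ with hSf
  have hSfsub : ∀ ω v, Sf ω v ⊆ ω v := by
    intro ω v
    rw [hSf]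
    dsimp only
    split
    · exact Finset.Subset.refl _
    · exact Finset.empty_subset _
  have hPF : ∀ ω, PartlyFeasible w π (Sf ω) := by
    intro ω v
    by_cases hc : conf v ω < 1/2
    · refine lt_of_le_of_lt ?_ hc
      rw [hconf]
      dsimp only
      refine Finset.sum_le_sum_of_subset_of_nonneg ?_ (fun u _ _ => hwbar u v)
      intro u hu
      simp only [Finset.mem_filter, Finset.mem_univ, true_and] at hu ⊢
      refine ⟨hu.1, ?_⟩
      obtain ⟨j, hj⟩ := hu.2
      exact ⟨j, Finset.mem_inter.mpr ⟨hSfsub ω u (Finset.mem_inter.mp hj).1,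
        hSfsub ω v (Finset.mem_inter.mp hj).2⟩⟩
    · have hv : Sf ω v = ∅ := by rw [hSf]; dsimp only; rw [if_neg hc]
      have he : univ.filter (fun u => π u < π v ∧ (Sf ω u ∩ Sf ω v).Nonempty)
          = ∅ := by
        apply Finset.filter_false_of_mem
        intro u _
        rw [hv]
        simp
      rw [he]
      norm_num
  -- single-coordinate marginal
  have claim1 : ∀ (v : Fin n) (T : Finset (Fin k)),
      ∑ ω ∈ univ.filter (fun ω : Fin n → Finset (Fin k) => ω v = T), P ω
        = p v T := by
    intro v T
    have e1 : ∑ ω ∈ univ.filter (fun ω : Fin n → Finset (Fin k) => ω v = T), P ω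
        = ∑ ω : Fin n → Finset (Fin k), P ω * (if ω v = T then 1 else 0) := by
      rw [Finset.sum_filter]
      refine Finset.sum_congr rfl fun ω _ => ?_
      split <;> simp
    rw [e1, hPdef, marginal_one p hp1 v (fun T' => if T' = T then 1 else 0)]
    simp [mul_ite, Finset.sum_ite_eq']
  -- marginal of the conflict indicator
  have hedge : ∀ (u : Fin n) (T : Finset (Fin k)),
      (∑ T', p u T' * (if (T' ∩ T).Nonempty then 1 else 0))
        = (∑ T' ∈ D.filter (fun T' => (T' ∩ T).Nonempty), x u T') / γ := by
    intro u T
    have e1 : (∑ T', p u T' * (if (T' ∩ T).Nonempty then 1 else 0))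
        = ∑ T' ∈ univ.filter (fun T' : Finset (Fin k) => (T' ∩ T).Nonempty),
            p u T' := by
      rw [Finset.sum_filter]
      refine Finset.sum_congr rfl fun T' _ => ?_
      split <;> simp
    have hsub : D.filter (fun T' => (T' ∩ T).Nonempty)
        ⊆ univ.filter (fun T' : Finset (Fin k) => (T' ∩ T).Nonempty) := by
      intro T' hT'
      simp only [Finset.mem_filter, Finset.mem_univ, true_and] at hT' ⊢
      exact hT'.2
    have hz : ∀ T' ∈ univ.filter (fun T' : Finset (Fin k) => (T' ∩ T).Nonempty),
        T' ∉ D.filter (fun T' => (T' ∩ T).Nonempty) → p u T' = 0 := by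
      intro T' hT' hT''
      simp only [Finset.mem_filter, Finset.mem_univ, true_and] at hT' hT''
      have hnD : T' ∉ D := fun h => hT'' ⟨h, hT'⟩
      have hne : T' ≠ ∅ := by
        rintro rfl
        simp at hT'
      simp [hpdef, hnD, hne]
    rw [e1, ← Finset.sum_subset hsub hz, Finset.sum_div]
    refine Finset.sum_congr rfl fun T' hT' => ?_
    simp [hpdef, (Finset.mem_filter.mp hT').1]
  -- Markov bound on the bad event
  have claim2 : ∀ (v : Fin n), ∀ T ∈ D,
      ∑ ω ∈ univ.filter (fun ω : Fin n → Finset (Fin k) =>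
          ω v = T ∧ ¬ (conf v ω < 1/2)), P ω ≤ p v T / 2 := by
    intro v T hT
    set A : Finset (Fin n) := univ.filter (fun u => π u < π v) with hA
    have hconfT : ∀ ω : Fin n → Finset (Fin k), ω v = T →
        conf v ω = ∑ u ∈ A, wbar w u v * (if (ω u ∩ T).Nonempty then 1 else 0) := by
      intro ω hωv
      calc conf v ω
          = ∑ u ∈ univ.filter (fun u => π u < π v ∧ (ω u ∩ T).Nonempty),
              wbar w u v := by simp only [hconf]; rw [hωv]
        _ = ∑ u ∈ A.filter (fun u => (ω u ∩ T).Nonempty), wbar w u v := by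
              rw [hA, Finset.filter_filter]
        _ = ∑ u ∈ A, if (ω u ∩ T).Nonempty then wbar w u v else 0 :=
              Finset.sum_filter _ _
        _ = ∑ u ∈ A, wbar w u v * (if (ω u ∩ T).Nonempty then 1 else 0) := by
              refine Finset.sum_congr rfl fun u _ => ?_
              split <;> simp
    have hcnn : ∀ ω : Fin n → Finset (Fin k),
        0 ≤ ∑ u ∈ A, wbar w u v * (if (ω u ∩ T).Nonempty then 1 else 0) := by
      intro ω
      refine Finset.sum_nonneg fun u _ => mul_nonneg (hwbar u v) ?_
      split <;> norm_num
    have step1 : ∑ ω ∈ univ.filter (fun ω : Fin n → Finset (Fin k) =>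
          ω v = T ∧ ¬ (conf v ω < 1/2)), P ω
        ≤ ∑ ω : Fin n → Finset (Fin k), P ω * ((if ω v = T then 1 else 0) *
            (2 * ∑ u ∈ A, wbar w u v * (if (ω u ∩ T).Nonempty then 1 else 0))) := by
      rw [Finset.sum_filter]
      refine Finset.sum_le_sum fun ω _ => ?_
      by_cases hcond : ω v = T ∧ ¬ (conf v ω < 1/2)
      · rw [if_pos hcond, if_pos hcond.1]
        have h1 : (1:ℝ) ≤ 2 * ∑ u ∈ A, wbar w u v *
            (if (ω u ∩ T).Nonempty then 1 else 0) := by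
          have := hcond.2
          rw [hconfT ω hcond.1] at this
          push_neg at this
          linarith
        nlinarith [hP0 ω]
      · rw [if_neg hcond]
        have := hcnn ω
        have := hP0 ω
        positivity
    have step2 : ∑ ω : Fin n → Finset (Fin k), P ω * ((if ω v = T then 1 else 0) *
            (2 * ∑ u ∈ A, wbar w u v * (if (ω u ∩ T).Nonempty then 1 else 0)))
        = ∑ u ∈ A, 2 * (wbar w u v *
            ∑ ω : Fin n → Finset (Fin k), P ω *
              ((if (ω u ∩ T).Nonempty then 1 else 0) * (if ω v = T then 1 else 0))) := by
      calc ∑ ω : Fin n → Finset (Fin k), P ω * ((if ω v = T then 1 else 0) *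
            (2 * ∑ u ∈ A, wbar w u v * (if (ω u ∩ T).Nonempty then 1 else 0)))
          = ∑ ω : Fin n → Finset (Fin k), ∑ u ∈ A, 2 * (wbar w u v *
              (P ω * ((if (ω u ∩ T).Nonempty then 1 else 0) *
                (if ω v = T then 1 else 0)))) := by
            refine Finset.sum_congr rfl fun ω _ => ?_
            rw [show P ω * ((if ω v = T then 1 else 0) *
                (2 * ∑ u ∈ A, wbar w u v * (if (ω u ∩ T).Nonempty then 1 else 0)))
              = (P ω * (if ω v = T then 1 else 0) * 2) *
                ∑ u ∈ A, wbar w u v * (if (ω u ∩ T).Nonempty then 1 else 0) from by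
                ring, Finset.mul_sum]
            exact Finset.sum_congr rfl fun u _ => by ring
        _ = ∑ u ∈ A, ∑ ω : Fin n → Finset (Fin k), 2 * (wbar w u v *
              (P ω * ((if (ω u ∩ T).Nonempty then 1 else 0) *
                (if ω v = T then 1 else 0)))) := Finset.sum_comm
        _ = ∑ u ∈ A, 2 * (wbar w u v *
              ∑ ω : Fin n → Finset (Fin k), P ω *
                ((if (ω u ∩ T).Nonempty then 1 else 0) *
                  (if ω v = T then 1 else 0))) := by
            refine Finset.sum_congr rfl fun u _ => ?_
            rw [Finset.mul_sum, Finset.mul_sum]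
    have step3 : ∀ u ∈ A,
        ∑ ω : Fin n → Finset (Fin k), P ω *
            ((if (ω u ∩ T).Nonempty then 1 else 0) * (if ω v = T then 1 else 0))
          = ((∑ T' ∈ D.filter (fun T' => (T' ∩ T).Nonempty), x u T') / γ) * p v T := by
      intro u hu
      have huv : u ≠ v := by
        intro h
        rw [hA] at hu
        simp only [Finset.mem_filter, Finset.mem_univ, true_and] at hu
        rw [h] at hu
        exact lt_irrefl _ hu
      rw [hPdef, marginal_two p hp1 huv
        (fun T' => if (T' ∩ T).Nonempty then 1 else 0)
        (fun T' => if T' = T then 1 else 0), hedge u T]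
      congr 1
      simp [mul_ite, Finset.sum_ite_eq']
    have step4 : ∑ u ∈ A, 2 * (wbar w u v *
          (((∑ T' ∈ D.filter (fun T' => (T' ∩ T).Nonempty), x u T') / γ) * p v T))
        ≤ p v T / 2 := by
      have e : ∑ u ∈ A, 2 * (wbar w u v *
            (((∑ T' ∈ D.filter (fun T' => (T' ∩ T).Nonempty), x u T') / γ) * p v T))
          = (2 * p v T / γ) *
            ∑ u ∈ A, wbar w u v * ∑ T' ∈ D.filter (fun T' => (T' ∩ T).Nonempty), x u T' := by
        rw [Finset.mul_sum]
        refine Finset.sum_congr rfl fun u _ => ?_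
        field_simp
      rw [e]
      have hbound := hDb v T hT
      have hfac : 0 ≤ 2 * p v T / γ := div_nonneg (by linarith [hp0 v T]) hγ0.le
      calc (2 * p v T / γ) *
            ∑ u ∈ A, wbar w u v * ∑ T' ∈ D.filter (fun T' => (T' ∩ T).Nonempty), x u T'
          ≤ (2 * p v T / γ) * (Real.sqrt k * ρ) := by
            exact mul_le_mul_of_nonneg_left hbound hfac
        _ = p v T / 2 := by
            rw [hγdef]
            have hρ0 : (0:ℝ) < ρ := by linarith
            field_simp
            ring
    calc ∑ ω ∈ univ.filter (fun ω : Fin n → Finset (Fin k) =>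
          ω v = T ∧ ¬ (conf v ω < 1/2)), P ω
        ≤ ∑ u ∈ A, 2 * (wbar w u v *
            ∑ ω : Fin n → Finset (Fin k), P ω *
              ((if (ω u ∩ T).Nonempty then 1 else 0) *
                (if ω v = T then 1 else 0))) := by rw [← step2]; exact step1
      _ = ∑ u ∈ A, 2 * (wbar w u v *
            (((∑ T' ∈ D.filter (fun T' => (T' ∩ T).Nonempty), x u T') / γ) * p v T)) := by
            refine Finset.sum_congr rfl fun u hu => ?_
            rw [step3 u hu]
      _ ≤ p v T / 2 := step4
  have claim3 : ∀ (v : Fin n), ∀ T ∈ D,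
      p v T / 2 ≤ ∑ ω ∈ univ.filter (fun ω : Fin n → Finset (Fin k) =>
          ω v = T ∧ conf v ω < 1/2), P ω := by
    intro v T hT
    have hsplit := Finset.sum_filter_add_sum_filter_not
      (univ.filter (fun ω : Fin n → Finset (Fin k) => ω v = T))
      (fun ω => conf v ω < 1/2) P
    rw [Finset.filter_filter, Finset.filter_filter] at hsplit
    have h1 := claim1 v T
    have h2 := claim2 v T hT
    linarith
  -- pointwise value bound
  have hpt : ∀ (ω : Fin n → Finset (Fin k)) (v : Fin n),
      ∑ T ∈ D, (if ω v = T ∧ conf v ω < 1/2 then b v T else 0)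
        ≤ b v (Sf ω v) := by
    intro ω v
    by_cases hg : conf v ω < 1/2
    · have e : ∀ T ∈ D, (if ω v = T ∧ conf v ω < 1/2 then b v T else 0)
          = if ω v = T then b v T else 0 := by
        intro T _
        by_cases h : ω v = T
        · rw [if_pos ⟨h, hg⟩, if_pos h]
        · rw [if_neg (fun hc => h hc.1), if_neg h]
      rw [Finset.sum_congr rfl e, Finset.sum_ite_eq D (ω v) (fun T => b v T)]
      have hSv : Sf ω v = ω v := by rw [hSf]; dsimp only; rw [if_pos hg]
      rw [hSv]
      split
      · exact le_refl _
      · exact hb v _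
    · have e : ∀ T ∈ D, (if ω v = T ∧ conf v ω < 1/2 then b v T else 0) = 0 := by
        intro T _
        exact if_neg (fun hc => hg hc.2)
      rw [Finset.sum_congr rfl e, Finset.sum_const_zero]
      exact hb v _
  set E : ℝ := ∑ ω : Fin n → Finset (Fin k), P ω * ∑ v, b v (Sf ω v) with hE
  have hmain : ∑ v, ∑ T ∈ D, b v T * (p v T / 2) ≤ E := by
    calc ∑ v, ∑ T ∈ D, b v T * (p v T / 2)
        ≤ ∑ v, ∑ T ∈ D, b v T * ∑ ω ∈ univ.filter
            (fun ω : Fin n → Finset (Fin k) => ω v = T ∧ conf v ω < 1/2), P ω := by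
          refine Finset.sum_le_sum fun v _ => Finset.sum_le_sum fun T hT => ?_
          exact mul_le_mul_of_nonneg_left (claim3 v T hT) (hb v T)
      _ = ∑ v, ∑ T ∈ D, ∑ ω : Fin n → Finset (Fin k),
            P ω * (if ω v = T ∧ conf v ω < 1/2 then b v T else 0) := by
          refine Finset.sum_congr rfl fun v _ => Finset.sum_congr rfl fun T _ => ?_
          rw [Finset.sum_filter, Finset.mul_sum]
          refine Finset.sum_congr rfl fun ω _ => ?_
          split <;> ring
      _ = ∑ ω : Fin n → Finset (Fin k), P ω *
            ∑ v, ∑ T ∈ D, (if ω v = T ∧ conf v ω < 1/2 then b v T else 0) := by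
          calc ∑ v, ∑ T ∈ D, ∑ ω : Fin n → Finset (Fin k),
                P ω * (if ω v = T ∧ conf v ω < 1/2 then b v T else 0)
              = ∑ v, ∑ ω : Fin n → Finset (Fin k), ∑ T ∈ D,
                P ω * (if ω v = T ∧ conf v ω < 1/2 then b v T else 0) :=
                Finset.sum_congr rfl fun v _ => Finset.sum_comm
            _ = ∑ ω : Fin n → Finset (Fin k), ∑ v, ∑ T ∈ D,
                P ω * (if ω v = T ∧ conf v ω < 1/2 then b v T else 0) :=
                Finset.sum_comm
            _ = ∑ ω : Fin n → Finset (Fin k), P ω *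
                ∑ v, ∑ T ∈ D, (if ω v = T ∧ conf v ω < 1/2 then b v T else 0) := by
                refine Finset.sum_congr rfl fun ω _ => ?_
                simp_rw [Finset.mul_sum]
      _ ≤ E := by
          rw [hE]
          refine Finset.sum_le_sum fun ω _ => ?_
          exact mul_le_mul_of_nonneg_left
            (Finset.sum_le_sum fun v _ => hpt ω v) (hP0 ω)
  have hval : ∑ v, ∑ T ∈ D, b v T * (p v T / 2)
      = (∑ v, ∑ T ∈ D, b v T * x v T) / (8 * Real.sqrt k * ρ) := by
    rw [Finset.sum_div]
    refine Finset.sum_congr rfl fun v _ => ?_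
    rw [Finset.sum_div]
    refine Finset.sum_congr rfl fun T hT => ?_
    have : p v T = x v T / γ := by simp [hpdef, hT]
    rw [this, hγdef]
    have hρ0 : (0:ℝ) < ρ := by linarith
    rw [div_div, mul_div_assoc]
    congr 1
    ring
  obtain ⟨ω₀, hω₀⟩ : ∃ ω : Fin n → Finset (Fin k), E ≤ ∑ v, b v (Sf ω v) := by
    by_contra hcon
    push_neg at hcon
    have hPne : ∑ ω : Fin n → Finset (Fin k), P ω ≠ 0 := by
      rw [hPmass]; norm_num
    obtain ⟨ω₁, _, hω₁⟩ := Finset.exists_ne_zero_of_sum_ne_zero hPne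
    have hlt : ∑ ω : Fin n → Finset (Fin k), P ω * ∑ v, b v (Sf ω v)
        < ∑ ω : Fin n → Finset (Fin k), P ω * E := by
      apply Finset.sum_lt_sum
      · intro ω _
        exact mul_le_mul_of_nonneg_left (hcon ω).le (hP0 ω)
      · exact ⟨ω₁, Finset.mem_univ _,
          mul_lt_mul_of_pos_left (hcon ω₁)
            (lt_of_le_of_ne (hP0 ω₁) (Ne.symm hω₁))⟩
    rw [← Finset.sum_mul, hPmass, one_mul, ← hE] at hlt
    exact lt_irrefl E hlt
  refine ⟨Sf ω₀, hPF ω₀, ?_⟩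
  calc (∑ v, ∑ T ∈ D, b v T * x v T) / (8 * Real.sqrt k * ρ)
      = ∑ v, ∑ T ∈ D, b v T * (p v T / 2) := hval.symm
    _ ≤ E := hmain
    _ ≤ ∑ v, b v (Sf ω₀ v) := hω₀

theorem exists_partly_feasible_alloc_of_weighted_lp_solution {n k : ℕ}
    (hk : 1 ≤ k)
    (w : Fin n → Fin n → ℝ) (hw : ∀ u v, 0 ≤ w u v) (hw0 : ∀ v, w v v = 0)
    (π : Equiv.Perm (Fin n)) (ρ : ℝ) (hρ : 1 ≤ ρ)
    (hind : WIndIndepAtMost w π ρ)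
    (b : Fin n → Finset (Fin k) → ℝ) (hb : ∀ v T, 0 ≤ b v T)
    (hb0 : ∀ v, b v ∅ = 0)
    (x : Fin n → Finset (Fin k) → ℝ) (hx : WIsLPSol w π ρ x) :
    ∃ S : Fin n → Finset (Fin k), PartlyFeasible w π S ∧
      (∑ v : Fin n, ∑ T : Finset (Fin k), b v T * x v T)
          / (16 * Real.sqrt k * ρ)
        ≤ ∑ v : Fin n, b v (S v) := by
  classical
  obtain ⟨hx0, hx1, hx2⟩ := hx
  have hwbar : ∀ u v, 0 ≤ wbar w u v := fun u v => add_nonneg (hw u v) (hw v u)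
  have hsk : (1:ℝ) ≤ Real.sqrt k := by
    rw [show (1:ℝ) = Real.sqrt 1 by simp]
    exact Real.sqrt_le_sqrt (by exact_mod_cast hk)
  have hsk0 : (0:ℝ) < Real.sqrt k := by linarith
  have hρ0 : (0:ℝ) < ρ := by linarith
  -- the two classes
  set Ds : Finset (Finset (Fin k)) :=
    univ.filter (fun T : Finset (Fin k) =>
      T ≠ ∅ ∧ (T.card : ℝ) ≤ Real.sqrt k) with hDs
  set Dl : Finset (Finset (Fin k)) :=
    univ.filter (fun T : Finset (Fin k) => Real.sqrt k < (T.card : ℝ)) with hDl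
  have hDs0 : ∅ ∉ Ds := by simp [hDs]
  have hDl0 : ∅ ∉ Dl := by
    simp only [hDl, Finset.mem_filter, Finset.mem_univ, true_and]
    push_neg
    simp only [Finset.card_empty, Nat.cast_zero]
    linarith
  -- LP constraint in convenient form
  have hLP : ∀ (v : Fin n) (j : Fin k),
      ∑ u ∈ univ.filter (fun u => π u < π v),
        wbar w u v * ∑ T' ∈ univ.filter (fun T' : Finset (Fin k) => j ∈ T'), x u T'
        ≤ ρ := by
    intro v j
    have := hx1 v j
    calc ∑ u ∈ univ.filter (fun u => π u < π v),
          wbar w u v * ∑ T' ∈ univ.filter (fun T' : Finset (Fin k) => j ∈ T'), x u T'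
        = ∑ u ∈ univ.filter (fun u => π u < π v),
          ∑ T' ∈ univ.filter (fun T' : Finset (Fin k) => j ∈ T'), wbar w u v * x u T' := by
          refine Finset.sum_congr rfl fun u _ => ?_
          rw [Finset.mul_sum]
      _ ≤ ρ := this
  -- bound for the small class
  have hDbs : ∀ (v : Fin n), ∀ T ∈ Ds,
      ∑ u ∈ univ.filter (fun u => π u < π v),
        wbar w u v * ∑ T' ∈ Ds.filter (fun T' => (T' ∩ T).Nonempty), x u T'
        ≤ Real.sqrt k * ρ := by
    intro v T hT
    have hTcard : (T.card : ℝ) ≤ Real.sqrt k := by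
      simp only [hDs, Finset.mem_filter, Finset.mem_univ, true_and] at hT
      exact hT.2
    calc ∑ u ∈ univ.filter (fun u => π u < π v),
          wbar w u v * ∑ T' ∈ Ds.filter (fun T' => (T' ∩ T).Nonempty), x u T'
        ≤ ∑ u ∈ univ.filter (fun u => π u < π v),
          wbar w u v * ∑ j ∈ T, ∑ T' ∈ univ.filter
            (fun T' : Finset (Fin k) => j ∈ T'), x u T' := by
          refine Finset.sum_le_sum fun u _ => ?_
          exact mul_le_mul_of_nonneg_left
            (count_inter (x u) (hx0 u) Ds T) (hwbar u v)
      _ = ∑ j ∈ T, ∑ u ∈ univ.filter (fun u => π u < π v),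
            wbar w u v * ∑ T' ∈ univ.filter
              (fun T' : Finset (Fin k) => j ∈ T'), x u T' := by
          simp_rw [Finset.mul_sum]
          exact Finset.sum_comm
      _ ≤ ∑ j ∈ T, ρ := Finset.sum_le_sum fun j _ => hLP v j
      _ = (T.card : ℝ) * ρ := by rw [Finset.sum_const, nsmul_eq_mul]
      _ ≤ Real.sqrt k * ρ := by nlinarith
  -- bound for the large class
  have hDbl : ∀ (v : Fin n), ∀ T ∈ Dl,
      ∑ u ∈ univ.filter (fun u => π u < π v),
        wbar w u v * ∑ T' ∈ Dl.filter (fun T' => (T' ∩ T).Nonempty), x u T'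
        ≤ Real.sqrt k * ρ := by
    intro v T _
    have hinner : ∀ u : Fin n,
        ∑ T' ∈ Dl.filter (fun T' => (T' ∩ T).Nonempty), x u T'
          ≤ (1 / Real.sqrt k) * ∑ j : Fin k, ∑ T' ∈ univ.filter
              (fun T' : Finset (Fin k) => j ∈ T'), x u T' := by
      intro u
      rw [dbl_count (x u)]
      calc ∑ T' ∈ Dl.filter (fun T' => (T' ∩ T).Nonempty), x u T'
          ≤ ∑ T' ∈ Dl.filter (fun T' => (T' ∩ T).Nonempty),
              (1 / Real.sqrt k) * ((T'.card : ℝ) * x u T') := by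
            refine Finset.sum_le_sum fun T' hT' => ?_
            have h1 : Real.sqrt k < (T'.card : ℝ) := by
              have := (Finset.mem_filter.mp hT').1
              simp only [hDl, Finset.mem_filter, Finset.mem_univ, true_and] at this
              exact this
            have h2 : 0 ≤ x u T' := hx0 u T'
            rw [div_mul_eq_mul_div, one_mul, le_div_iff₀ hsk0]
            nlinarith
        _ ≤ ∑ T' : Finset (Fin k), (1 / Real.sqrt k) * ((T'.card : ℝ) * x u T') := by
            refine Finset.sum_le_sum_of_subset_of_nonneg
              (Finset.subset_univ _) fun T' _ _ => ?_
            have := hx0 u T'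
            positivity
        _ = (1 / Real.sqrt k) * ∑ T' : Finset (Fin k), (T'.card : ℝ) * x u T' := by
            rw [Finset.mul_sum]
    calc ∑ u ∈ univ.filter (fun u => π u < π v),
          wbar w u v * ∑ T' ∈ Dl.filter (fun T' => (T' ∩ T).Nonempty), x u T'
        ≤ ∑ u ∈ univ.filter (fun u => π u < π v),
          wbar w u v * ((1 / Real.sqrt k) * ∑ j : Fin k, ∑ T' ∈ univ.filter
              (fun T' : Finset (Fin k) => j ∈ T'), x u T') := by
          refine Finset.sum_le_sum fun u _ => ?_
          exact mul_le_mul_of_nonneg_left (hinner u) (hwbar u v)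
      _ = (1 / Real.sqrt k) * ∑ j : Fin k, ∑ u ∈ univ.filter (fun u => π u < π v),
            wbar w u v * ∑ T' ∈ univ.filter
              (fun T' : Finset (Fin k) => j ∈ T'), x u T' := by
          simp_rw [Finset.mul_sum]
          rw [Finset.sum_comm]
          refine Finset.sum_congr rfl fun j _ => Finset.sum_congr rfl fun u _ =>
            Finset.sum_congr rfl fun T' _ => by ring
      _ ≤ (1 / Real.sqrt k) * ∑ j : Fin k, ρ := by
          refine mul_le_mul_of_nonneg_left
            (Finset.sum_le_sum fun j _ => hLP v j) (by positivity)
      _ = (1 / Real.sqrt k) * ((k : ℝ) * ρ) := by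
          rw [Finset.sum_const, Finset.card_univ, Fintype.card_fin, nsmul_eq_mul]
      _ = Real.sqrt k * ρ := by
          rw [show (1 / Real.sqrt k) * ((k:ℝ) * ρ) = ((k:ℝ) / Real.sqrt k) * ρ by ring,
            Real.div_sqrt]
  -- split the LP value
  have hsplit : ∑ v : Fin n, ∑ T : Finset (Fin k), b v T * x v T
      = (∑ v : Fin n, ∑ T ∈ Ds, b v T * x v T)
        + ∑ v : Fin n, ∑ T ∈ Dl, b v T * x v T := by
    rw [← Finset.sum_add_distrib]
    refine Finset.sum_congr rfl fun v _ => ?_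
    have e1 : ∑ T ∈ univ.filter (fun T : Finset (Fin k) =>
        (T.card : ℝ) ≤ Real.sqrt k), b v T * x v T
        = ∑ T ∈ Ds, b v T * x v T := by
      refine (Finset.sum_subset ?_ ?_).symm
      · intro T hT
        simp only [hDs, Finset.mem_filter, Finset.mem_univ, true_and] at hT ⊢
        exact hT.2
      · intro T hT hT'
        simp only [hDs, Finset.mem_filter, Finset.mem_univ, true_and] at hT hT'
        push_neg at hT'
        have : T = ∅ := by
          by_contra hne
          exact absurd (hT' (Finset.nonempty_iff_ne_empty.mpr hne)) (not_lt.mpr hT)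
        rw [this, hb0 v, zero_mul]
    have e2 : ∑ T ∈ univ.filter (fun T : Finset (Fin k) =>
        ¬ ((T.card : ℝ) ≤ Real.sqrt k)), b v T * x v T
        = ∑ T ∈ Dl, b v T * x v T := by
      refine Finset.sum_congr ?_ fun _ _ => rfl
      refine Finset.filter_congr fun T _ => ?_
      simp [hDl, not_le]
    rw [← e1, ← e2]
    exact (Finset.sum_filter_add_sum_filter_not univ _ _).symm
  have hnn : ∀ (D : Finset (Finset (Fin k))),
      0 ≤ ∑ v : Fin n, ∑ T ∈ D, b v T * x v T :=
    fun D => Finset.sum_nonneg fun v _ => Finset.sum_nonneg fun T _ =>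
      mul_nonneg (hb v T) (hx0 v T)
  -- choose the better class
  set bstar : ℝ := ∑ v : Fin n, ∑ T : Finset (Fin k), b v T * x v T with hbs
  have h8 : (0:ℝ) < 8 * Real.sqrt k * ρ := by positivity
  have key : ∀ (D : Finset (Finset (Fin k))), ∅ ∉ D →
      (∀ (v : Fin n), ∀ T ∈ D,
        ∑ u ∈ univ.filter (fun u => π u < π v),
          wbar w u v * ∑ T' ∈ D.filter (fun T' => (T' ∩ T).Nonempty), x u T'
          ≤ Real.sqrt k * ρ) →
      bstar ≤ 2 * ∑ v : Fin n, ∑ T ∈ D, b v T * x v T →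
      ∃ S : Fin n → Finset (Fin k), PartlyFeasible w π S ∧
        bstar / (16 * Real.sqrt k * ρ) ≤ ∑ v : Fin n, b v (S v) := by
    intro D hD0 hDb hhalf
    obtain ⟨S, hS1, hS2⟩ := aux_round hk w hw π ρ hρ b hb x hx0 hx2 D hD0 hDb
    refine ⟨S, hS1, le_trans ?_ hS2⟩
    rw [show (16:ℝ) * Real.sqrt k * ρ = (8 * Real.sqrt k * ρ) * 2 by ring,
      ← div_div, div_right_comm]
    exact (div_le_div_iff_of_pos_right h8).mpr (by linarith)
  rcases le_total (∑ v : Fin n, ∑ T ∈ Dl, b v T * x v T)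
      (∑ v : Fin n, ∑ T ∈ Ds, b v T * x v T) with hc | hc
  · exact key Ds hDs0 hDbs (by rw [hsplit]; linarith)
  · exact key Dl hDl0 hDbl (by rw [hsplit]; linarith)
end

section
/- Suppose the edge-weighted conflict graph on n ≥ 2 vertices has inductive independence number at most ρ ≥ 1 with respect to the ordering π, and let x be a fractional LP solution of the weighted LP with value b*. Then there exists a feasible allocation S with b(S) ≥ b*/(16·√k·ρ·⌈log₂ n⌉). -/
open Finset

lemma wbar_comm {n : ℕ} (w : Fin n → Fin n → ℝ) (u v : Fin n) :
    wbar w u v = wbar w v u := add_comm _ _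

lemma wbar_nonneg {n : ℕ} {w : Fin n → Fin n → ℝ} (hw : ∀ u v, 0 ≤ w u v)
    (u v : Fin n) : 0 ≤ wbar w u v := add_nonneg (hw u v) (hw v u)

section prob

variable {n : ℕ} {β : Type*} [Fintype β] [DecidableEq β]

lemma pi_sum_prod (p : Fin n → β → ℝ) :
    ∑ f : Fin n → β, ∏ v, p v (f v) = ∏ v, ∑ d, p v d :=
  (Fintype.prod_sum p).symm

lemma prod_eval1 (g : Fin n → ℝ) (u : Fin n) (h : ∀ i, i ≠ u → g i = 1) :
    ∏ i, g i = g u := by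
  rw [← Finset.mul_prod_erase univ g (mem_univ u)]
  rw [Finset.prod_eq_one (fun i hi => h i (Finset.ne_of_mem_erase hi)), mul_one]

lemma prod_eval2 (g : Fin n → ℝ) (u v : Fin n) (huv : u ≠ v)
    (h : ∀ i, i ≠ u → i ≠ v → g i = 1) : ∏ i, g i = g u * g v := by
  rw [← Finset.mul_prod_erase univ g (mem_univ u),
    ← Finset.mul_prod_erase (univ.erase u) g
      (Finset.mem_erase.2 ⟨huv.symm, mem_univ v⟩)]
  rw [Finset.prod_eq_one (fun i hi => by
    have h1 := Finset.ne_of_mem_erase hi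
    have h2 := Finset.ne_of_mem_erase (Finset.mem_of_mem_erase hi)
    exact h i h2 h1), mul_one]

lemma update_prod (p : Fin n → β → ℝ) (u : Fin n) (c : β → ℝ) (f : Fin n → β) :
    ∏ v, (Function.update p u (fun d => p u d * c d)) v (f v)
      = (∏ v, p v (f v)) * c (f u) := by
  rw [← Finset.mul_prod_erase univ
      (fun v => (Function.update p u (fun d => p u d * c d)) v (f v)) (mem_univ u),
    ← Finset.mul_prod_erase univ (fun v => p v (f v)) (mem_univ u)]
  rw [show (Function.update p u (fun d => p u d * c d)) u (f u) = p u (f u) * c (f u) by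
    rw [Function.update_self]]
  have he : ∏ v ∈ univ.erase u, (Function.update p u (fun d => p u d * c d)) v (f v)
      = ∏ v ∈ univ.erase u, p v (f v) :=
    Finset.prod_congr rfl (fun v hv => by
      rw [Function.update_of_ne (Finset.ne_of_mem_erase hv)])
  rw [he]
  ring

lemma esingle (p : Fin n → β → ℝ) (hp1 : ∀ v, ∑ d, p v d = 1)
    (u : Fin n) (c : β → ℝ) :
    ∑ f : Fin n → β, (∏ v, p v (f v)) * c (f u) = ∑ d, p u d * c d := by
  classical
  have h1 : ∑ f : Fin n → β, (∏ v, p v (f v)) * c (f u)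
      = ∑ f : Fin n → β, ∏ v, (Function.update p u (fun d => p u d * c d)) v (f v) := by
    refine Finset.sum_congr rfl (fun f _ => (update_prod p u c f).symm)
  rw [h1, pi_sum_prod]
  rw [prod_eval1 _ u (fun i hi => by
    rw [show (fun d => (Function.update p u (fun d => p u d * c d)) i d) = p i from
      funext (fun d => by rw [Function.update_of_ne hi])]
    exact hp1 i)]
  rw [Function.update_self]

lemma epair (p : Fin n → β → ℝ) (hp1 : ∀ v, ∑ d, p v d = 1)
    (u v : Fin n) (huv : u ≠ v) (c d : β → ℝ) :
    ∑ f : Fin n → β, (∏ i, p i (f i)) * (c (f u) * d (f v))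
      = (∑ e, p u e * c e) * (∑ e, p v e * d e) := by
  classical
  set q : Fin n → β → ℝ := Function.update p u (fun e => p u e * c e) with hq
  set r : Fin n → β → ℝ := Function.update q v (fun e => q v e * d e) with hr
  have hqv : q v = p v := by rw [hq]; exact Function.update_of_ne (Ne.symm huv) _ _
  have h1 : ∑ f : Fin n → β, (∏ i, p i (f i)) * (c (f u) * d (f v))
      = ∑ f : Fin n → β, ∏ i, r i (f i) := by
    refine Finset.sum_congr rfl (fun f _ => ?_)
    rw [hr]
    have := update_prod q v (fun e => d e) f
    have h2 : (fun e => q v e * d e) = (fun e => q v e * (fun e => d e) e) := rfl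
    rw [h2, this, hq, update_prod p u c f]
    ring
  rw [h1, pi_sum_prod]
  rw [prod_eval2 _ u v huv (fun i hiu hiv => by
    have : (fun e => r i e) = p i := funext (fun e => by
      rw [hr, Function.update_of_ne hiv, hq, Function.update_of_ne hiu])
    rw [this]; exact hp1 i)]
  have hru : (fun e => r u e) = fun e => p u e * c e := funext (fun e => by
    rw [hr, Function.update_of_ne huv, hq, Function.update_self])
  have hrv : (fun e => r v e) = fun e => p v e * d e := funext (fun e => by
    rw [hr, Function.update_self, hqv])
  rw [hru, hrv]

end prob

section level

variable {n : ℕ}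

/-- Existence of a first-fit level function processed from the last vertex. -/
lemma exists_level (π : Equiv.Perm (Fin n)) (D : Fin n → Fin n → ℝ) :
    ∃ f : Fin n → ℕ, ∀ v : Fin n, 1 ≤ f v ∧
      (∑ u ∈ univ.filter (fun u => π v < π u ∧ f u = f v), D v u < 1/2) ∧
      (∀ i, 1 ≤ i → i < f v →
        1/2 ≤ ∑ u ∈ univ.filter (fun u => π v < π u ∧ f u = i), D v u) := by
  classical
  let spec : (Fin n → ℕ) → Fin n → Prop := fun f v =>
    1 ≤ f v ∧
      (∑ u ∈ univ.filter (fun u => π v < π u ∧ f u = f v), D v u < 1/2) ∧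
      (∀ i, 1 ≤ i → i < f v →
        1/2 ≤ ∑ u ∈ univ.filter (fun u => π v < π u ∧ f u = i), D v u)
  suffices h : ∀ m : ℕ, ∃ f : Fin n → ℕ,
      (∀ v : Fin n, n ≤ m + (π v : ℕ) → spec f v) ∧
      (∀ v : Fin n, (π v : ℕ) + m < n → f v = 0) by
    obtain ⟨f, hf, -⟩ := h n
    exact ⟨f, fun v => hf v (Nat.le_add_right_of_le (Nat.le_refl n))⟩
  intro m
  induction m with
  | zero =>
    refine ⟨fun _ => 0, fun v hv => absurd hv ?_, fun _ _ => rfl⟩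
    simp only [Nat.zero_add, not_le]
    exact (π v).isLt
  | succ m ih =>
    obtain ⟨f, hf1, hf2⟩ := ih
    by_cases hm : m < n
    · obtain ⟨v₀, hπv₀⟩ : ∃ v₀ : Fin n, (π v₀ : ℕ) = n - 1 - m :=
        ⟨π.symm ⟨n - 1 - m, by omega⟩, by rw [Equiv.apply_symm_apply]⟩
      have hex : ∃ i, 1 ≤ i ∧
          (∑ u ∈ univ.filter (fun u => π v₀ < π u ∧ f u = i), D v₀ u < 1/2) := by
        refine ⟨(univ.sup f) + 1, Nat.le_add_left 1 _, ?_⟩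
        have he : univ.filter (fun u => π v₀ < π u ∧ f u = (univ.sup f) + 1) = ∅ := by
          refine Finset.filter_eq_empty_iff.2 (fun u _ => ?_)
          rintro ⟨-, h2⟩
          have := Finset.le_sup (f := f) (Finset.mem_univ u)
          omega
        rw [he]
        norm_num
      obtain ⟨i₀, hi₀⟩ : ∃ i₀, (1 ≤ i₀ ∧
            (∑ u ∈ univ.filter (fun u => π v₀ < π u ∧ f u = i₀), D v₀ u < 1/2)) ∧
          ∀ i, 1 ≤ i → i < i₀ →
            1/2 ≤ ∑ u ∈ univ.filter (fun u => π v₀ < π u ∧ f u = i), D v₀ u := by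
        refine ⟨Nat.find hex, Nat.find_spec hex, fun i hi1 hi2 => ?_⟩
        have := Nat.find_min hex hi2
        by_contra hcon
        push_neg at hcon
        exact this ⟨hi1, hcon⟩
      refine ⟨Function.update f v₀ i₀, ?_, ?_⟩
      · -- key: for any v with π v₀ ≤ π v, the filter-sums are unchanged
        have hupd : ∀ v : Fin n, (n - 1 - m) ≤ (π v : ℕ) →
            ∀ u : Fin n, π v < π u → Function.update f v₀ i₀ u = f u := by
          intro v hv u hu
          refine Function.update_of_ne (fun h => ?_) _ _
          have : (π u : ℕ) = n - 1 - m := by rw [h, hπv₀]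
          have h2 : (π v : ℕ) < (π u : ℕ) := hu
          omega
        have hsum : ∀ v : Fin n, (n - 1 - m) ≤ (π v : ℕ) → ∀ j,
            ∑ u ∈ univ.filter (fun u => π v < π u ∧
                Function.update f v₀ i₀ u = j), D v u
              = ∑ u ∈ univ.filter (fun u => π v < π u ∧ f u = j), D v u := by
          intro v hv j
          refine Finset.sum_congr (Finset.filter_congr (fun u _ => ?_)) (fun _ _ => rfl)
          constructor
          · rintro ⟨h1, h2⟩; exact ⟨h1, by rw [← hupd v hv u h1]; exact h2⟩
          · rintro ⟨h1, h2⟩; exact ⟨h1, by rw [hupd v hv u h1]; exact h2⟩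
        intro v hv
        by_cases hvv : v = v₀
        · rw [hvv]
          have hge : (n - 1 - m) ≤ (π v₀ : ℕ) := by omega
          refine ⟨?_, ?_, ?_⟩
          · rw [Function.update_self]; exact hi₀.1.1
          · rw [Function.update_self, hsum v₀ hge]; exact hi₀.1.2
          · intro i h1 h2
            rw [Function.update_self] at h2
            rw [hsum v₀ hge]
            exact hi₀.2 i h1 h2
        · have hne : (π v : ℕ) ≠ n - 1 - m := by
            intro h
            exact hvv (π.injective (Fin.ext (by rw [hπv₀]; exact h)))
          have hge : (n - 1 - m) ≤ (π v : ℕ) := by omega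
          have hfv : Function.update f v₀ i₀ v = f v :=
            Function.update_of_ne hvv _ _
          have hold : spec f v := hf1 v (by omega)
          refine ⟨by rw [hfv]; exact hold.1, ?_, ?_⟩
          · rw [hfv, hsum v hge]; exact hold.2.1
          · intro i h1 h2
            rw [hfv] at h2
            rw [hsum v hge]
            exact hold.2.2 i h1 h2
      · intro v hv
        have hvne : v ≠ v₀ := by
          intro h
          rw [h] at hv
          omega
        rw [Function.update_of_ne hvne]
        exact hf2 v (by omega)
    · refine ⟨f, fun v _ => hf1 v (by omega), fun v hv => hf2 v (by omega)⟩

end level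

lemma level_bound {n : ℕ} (hn : 2 ≤ n) (π : Equiv.Perm (Fin n))
    (D : Fin n → Fin n → ℝ) (hD0 : ∀ u v, 0 ≤ D u v)
    (hD : ∀ u : Fin n, ∑ v ∈ univ.filter (fun v => π v < π u), D v u < 1/2)
    (f : Fin n → ℕ)
    (hf : ∀ v : Fin n, 1 ≤ f v ∧
      (∑ u ∈ univ.filter (fun u => π v < π u ∧ f u = f v), D v u < 1/2) ∧
      (∀ i, 1 ≤ i → i < f v →
        1/2 ≤ ∑ u ∈ univ.filter (fun u => π v < π u ∧ f u = i), D v u)) :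
    ∀ v : Fin n, f v ≤ Nat.clog 2 n := by
  classical
  set N : ℕ → Finset (Fin n) := fun t => univ.filter (fun v => t ≤ f v) with hN
  have hmono : ∀ t, N (t+1) ⊆ N t := by
    intro t v hv
    simp only [hN, Finset.mem_filter] at hv ⊢
    exact ⟨hv.1, by omega⟩
  have key : ∀ t : ℕ, 1 ≤ t → (N (t+1)).Nonempty →
      2 * (N (t+1)).card < (N t).card := by
    intro t ht hne
    set Ct : Finset (Fin n) := univ.filter (fun u => f u = t) with hCt
    have step1 : ((N (t+1)).card : ℝ) * (1/2) ≤
        ∑ u ∈ Ct, ∑ v ∈ univ.filter (fun v => π v < π u), D v u := by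
      have h1 : ((N (t+1)).card : ℝ) * (1/2) = ∑ v ∈ N (t+1), (1/2 : ℝ) := by
        rw [Finset.sum_const]
        simp [mul_comm]
      rw [h1]
      have h2 : ∑ v ∈ N (t+1), (1/2 : ℝ) ≤
          ∑ v ∈ N (t+1), ∑ u ∈ univ.filter (fun u => π v < π u ∧ f u = t), D v u := by
        refine Finset.sum_le_sum (fun v hv => ?_)
        simp only [hN, Finset.mem_filter] at hv
        exact (hf v).2.2 t ht (by omega)
      refine h2.trans ?_
      have h4 : ∑ v ∈ N (t+1), ∑ u ∈ univ.filter (fun u => π v < π u ∧ f u = t), D v u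
          = ∑ u : Fin n, ∑ v ∈ N (t+1), if π v < π u ∧ f u = t then D v u else 0 := by
        rw [← Finset.sum_comm]
        exact Finset.sum_congr rfl (fun v _ => by rw [Finset.sum_filter])
      rw [h4]
      have h5 : ∀ u : Fin n, (∑ v ∈ N (t+1), if π v < π u ∧ f u = t then D v u else 0)
          ≤ if f u = t then ∑ v ∈ univ.filter (fun v => π v < π u), D v u else 0 := by
        intro u
        by_cases hu : f u = t
        · have he : ∀ v ∈ N (t+1), (if π v < π u ∧ f u = t then D v u else 0)
              = if π v < π u then D v u else 0 := by
            intro v _; simp [hu]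
          rw [Finset.sum_congr rfl he, if_pos hu, ← Finset.sum_filter]
          exact Finset.sum_le_sum_of_subset_of_nonneg
            (Finset.monotone_filter_left _ (Finset.subset_univ _))
            (fun v _ _ => hD0 v u)
        · simp only [hu, if_false, and_false]
          simp
      refine (Finset.sum_le_sum (fun u (_ : u ∈ univ) => h5 u)).trans ?_
      rw [← Finset.sum_filter]
    have hCtne : Ct.Nonempty := by
      by_contra hcon
      rw [Finset.not_nonempty_iff_eq_empty] at hcon
      rw [hcon, Finset.sum_empty] at step1
      obtain ⟨v, hv⟩ := hne
      have : (0 : ℝ) < ((N (t+1)).card : ℝ) * (1/2) := by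
        have : 0 < (N (t+1)).card := Finset.card_pos.2 ⟨v, hv⟩
        positivity
      linarith
    have step2 : ∑ u ∈ Ct, ∑ v ∈ univ.filter (fun v => π v < π u), D v u
        < ∑ u ∈ Ct, (1/2 : ℝ) :=
      Finset.sum_lt_sum_of_nonempty hCtne (fun u _ => hD u)
    have step3 : ((N (t+1)).card : ℝ) < (Ct.card : ℝ) := by
      rw [Finset.sum_const] at step2
      simp only [nsmul_eq_mul] at step2
      nlinarith
    have hcard : (N (t+1)).card < Ct.card := by exact_mod_cast step3
    have hdisj : Disjoint Ct (N (t+1)) := by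
      rw [Finset.disjoint_left]
      intro v hv hv2
      simp only [hCt, hN, Finset.mem_filter] at hv hv2
      omega
    have hsub : Ct ∪ N (t+1) ⊆ N t := by
      intro v hv
      rcases Finset.mem_union.1 hv with h | h
      · simp only [hCt, hN, Finset.mem_filter] at h ⊢
        exact ⟨h.1, by omega⟩
      · exact hmono t h
    have := (Finset.card_union_of_disjoint hdisj) ▸ Finset.card_le_card hsub
    omega
  have main : ∀ t : ℕ, N (t+1) = ∅ ∨ ((N (t+1)).card + 1) * 2^t ≤ n + 1 := by
    intro t
    induction t with
    | zero =>
      right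
      have h1 : (N (0+1)).card ≤ n := by
        have := Finset.card_le_univ (N (0+1))
        simpa using this
      omega
    | succ t ih =>
      by_cases h : N (t+1+1) = ∅
      · exact Or.inl h
      · right
        have hne : (N (t+1+1)).Nonempty := Finset.nonempty_iff_ne_empty.2 h
        have hkey := key (t+1) (by omega) hne
        rcases ih with h1 | h1
        · exfalso
          have h2 : N (t+1+1) ⊆ N (t+1) := hmono (t+1)
          rw [h1] at h2
          exact h (Finset.subset_empty.1 h2)
        · have e : ((N (t+1+1)).card + 1) * 2 ^ (t+1)
              = (2 * (N (t+1+1)).card + 2) * 2 ^ t := by ring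
          rw [e]
          calc (2 * (N (t+1+1)).card + 2) * 2 ^ t
              ≤ ((N (t+1)).card + 1) * 2 ^ t :=
                Nat.mul_le_mul_right _ (by omega)
            _ ≤ n + 1 := h1
  intro v
  by_contra hcon
  push_neg at hcon
  set L := Nat.clog 2 n with hL
  have hvN : v ∈ N (L+1) := by
    simp only [hN, Finset.mem_filter]
    exact ⟨Finset.mem_univ v, by omega⟩
  rcases main L with h | h
  · rw [h] at hvN
    exact absurd hvN (Finset.notMem_empty v)
  · have hcard : 1 ≤ (N (L+1)).card := Finset.card_pos.2 ⟨v, hvN⟩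
    have hpow : n ≤ 2 ^ L := Nat.le_pow_clog one_lt_two n
    have h2 : 2 * 2 ^ L ≤ ((N (L+1)).card + 1) * 2 ^ L :=
      Nat.mul_le_mul_right _ (by omega)
    omega

lemma decompose {n k : ℕ} (hn : 2 ≤ n)
    (w : Fin n → Fin n → ℝ) (hw : ∀ u v, 0 ≤ w u v) (hw0 : ∀ v, w v v = 0)
    (π : Equiv.Perm (Fin n))
    (b : Fin n → Finset (Fin k) → ℝ) (hb : ∀ v T, 0 ≤ b v T)
    (hb0 : ∀ v, b v ∅ = 0)
    (S : Fin n → Finset (Fin k)) (hS : PartlyFeasible w π S) :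
    ∃ S' : Fin n → Finset (Fin k), WFeasibleAlloc w S' ∧
      (∑ v, b v (S v)) / (Nat.clog 2 n : ℝ) ≤ ∑ v, b v (S' v) := by
  classical
  set D : Fin n → Fin n → ℝ :=
    fun v u => if (S v ∩ S u).Nonempty then wbar w v u else 0 with hD
  have hD0 : ∀ v u, 0 ≤ D v u := by
    intro v u
    simp only [hD]
    split
    · exact wbar_nonneg hw v u
    · exact le_refl 0
  have hDbound : ∀ u : Fin n, ∑ v ∈ univ.filter (fun v => π v < π u), D v u < 1/2 := by
    intro u
    have h1 : ∑ v ∈ univ.filter (fun v => π v < π u), D v u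
        = ∑ v ∈ univ.filter (fun v => π v < π u ∧ (S v ∩ S u).Nonempty), wbar w v u := by
      have e1 : ∑ v ∈ univ.filter (fun v => π v < π u), D v u
          = ∑ v ∈ (univ.filter (fun v => π v < π u)).filter
              (fun v => (S v ∩ S u).Nonempty), wbar w v u := by
        rw [Finset.sum_filter (fun v => (S v ∩ S u).Nonempty) (fun v => wbar w v u)]
      rw [e1, Finset.filter_filter]
    rw [h1]
    exact hS u
  obtain ⟨f, hf⟩ := exists_level π D
  have hfb := level_bound hn π D hD0 hDbound f hf
  set L := Nat.clog 2 n with hLdef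
  have hL1 : 1 ≤ L := Nat.clog_pos one_lt_two hn
  set Si : ℕ → (Fin n → Finset (Fin k)) :=
    fun i v => if f v = i then S v else ∅ with hSi
  -- feasibility of each class
  have hfeas : ∀ i : ℕ, WFeasibleAlloc w (Si i) := by
    intro i j
    intro v hv
    set M : Finset (Fin n) := univ.filter (fun v => j ∈ Si i v) with hM
    have hmem : ∀ u ∈ M, f u = i ∧ j ∈ S u := by
      intro u hu
      simp only [hM, Finset.mem_filter, hSi] at hu
      rcases hu with ⟨-, hu⟩
      by_cases h : f u = i
      · exact ⟨h, by simpa [h] using hu⟩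
      · simp [h] at hu
    have hvM := hmem v hv
    rw [← Finset.sum_filter_add_sum_filter_not M (fun u => π u < π v) (fun u => w u v)]
    have hfirst : ∑ u ∈ M.filter (fun u => π u < π v), w u v < 1/2 := by
      have h2 : ∑ u ∈ M.filter (fun u => π u < π v), w u v
          ≤ ∑ u ∈ M.filter (fun u => π u < π v), wbar w u v := by
        refine Finset.sum_le_sum (fun u _ => ?_)
        have := hw v u
        simp only [wbar]
        linarith [hw u v]
      refine lt_of_le_of_lt (h2.trans ?_) (hS v)
      refine Finset.sum_le_sum_of_subset_of_nonneg ?_ (fun u _ _ => wbar_nonneg hw u v)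
      intro u hu
      rw [Finset.mem_filter] at hu ⊢
      obtain ⟨hu1, hu2⟩ := hu
      obtain ⟨-, hju⟩ := hmem u hu1
      exact ⟨Finset.mem_univ u, hu2, ⟨j, Finset.mem_inter.2 ⟨hju, hvM.2⟩⟩⟩
    have hsecond : ∑ u ∈ M.filter (fun u => ¬ π u < π v), w u v < 1/2 := by
      have hvmem : v ∈ M.filter (fun u => ¬ π u < π v) :=
        Finset.mem_filter.2 ⟨hv, lt_irrefl _⟩
      rw [← Finset.add_sum_erase _ (fun u => w u v) hvmem, hw0 v]
      rw [zero_add]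
      have h3 : ∑ u ∈ (M.filter (fun u => ¬ π u < π v)).erase v, w u v
          ≤ ∑ u ∈ (M.filter (fun u => ¬ π u < π v)).erase v, D v u := by
        refine Finset.sum_le_sum (fun u hu => ?_)
        have huM : u ∈ M := Finset.mem_of_mem_filter u (Finset.mem_of_mem_erase hu)
        obtain ⟨-, hju⟩ := hmem u huM
        have hshared : (S v ∩ S u).Nonempty :=
          ⟨j, Finset.mem_inter.2 ⟨hvM.2, hju⟩⟩
        simp only [hD, hshared, if_true, wbar]
        linarith [hw v u]
      refine lt_of_le_of_lt (h3.trans ?_) ((hf v).2.1)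
      refine Finset.sum_le_sum_of_subset_of_nonneg ?_ (fun u _ _ => hD0 v u)
      intro u hu
      have hune : u ≠ v := Finset.ne_of_mem_erase hu
      have hu2 := Finset.mem_of_mem_erase hu
      rw [Finset.mem_filter] at hu2
      obtain ⟨huM, hnlt⟩ := hu2
      obtain ⟨hfi, -⟩ := hmem u huM
      rw [Finset.mem_filter]
      refine ⟨Finset.mem_univ u, ?_, by rw [hfi, hvM.1]⟩
      rcases lt_trichotomy (π v) (π u) with h | h | h
      · exact h
      · exact absurd (π.injective h).symm hune
      · exact absurd h hnlt
    linarith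
  -- value accounting
  have hsum : ∑ i ∈ Finset.Icc 1 L, ∑ v, b v (Si i v) = ∑ v, b v (S v) := by
    rw [Finset.sum_comm]
    refine Finset.sum_congr rfl (fun v _ => ?_)
    have h1 : ∀ i, b v (Si i v) = if f v = i then b v (S v) else 0 := by
      intro i
      simp only [hSi]
      by_cases h : f v = i
      · simp [h]
      · simp [h, hb0 v]
    rw [Finset.sum_congr rfl (fun i _ => h1 i)]
    rw [Finset.sum_ite_eq]
    have : f v ∈ Finset.Icc 1 L := Finset.mem_Icc.2 ⟨(hf v).1, hfb v⟩
    rw [if_pos this]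
  have hLpos : (0:ℝ) < (L : ℝ) := by exact_mod_cast hL1
  have havg : ∑ i ∈ Finset.Icc 1 L, ((∑ v, b v (S v)) / (L:ℝ))
      ≤ ∑ i ∈ Finset.Icc 1 L, ∑ v, b v (Si i v) := by
    rw [hsum, Finset.sum_const, Nat.card_Icc]
    simp only [nsmul_eq_mul]
    rw [show (L + 1 - 1 : ℕ) = L from rfl]
    rw [mul_div_cancel₀]
    exact ne_of_gt hLpos
  obtain ⟨i, himem, hi⟩ := Finset.exists_le_of_sum_le ⟨1, Finset.mem_Icc.2 ⟨le_refl 1, hL1⟩⟩ havg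
  exact ⟨Si i, hfeas i, hi⟩

lemma round_exists {n k : ℕ}
    (w : Fin n → Fin n → ℝ) (hw : ∀ u v, 0 ≤ w u v)
    (π : Equiv.Perm (Fin n))
    (b : Fin n → Finset (Fin k) → ℝ) (hb : ∀ v T, 0 ≤ b v T)
    (hb0 : ∀ v, b v ∅ = 0)
    (x : Fin n → Finset (Fin k) → ℝ) (hx0 : ∀ v T, 0 ≤ x v T)
    (hx1 : ∀ v, ∑ T : Finset (Fin k), x v T ≤ 1)
    (F : Finset (Finset (Fin k))) (hF : ∅ ∉ F)
    (α : ℝ) (hα : 1 ≤ α)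
    (hbound : ∀ v : Fin n, ∀ T ∈ F,
      ∑ u ∈ univ.filter (fun u => π u < π v), wbar w u v *
        (∑ T' ∈ F.filter (fun T' => (T' ∩ T).Nonempty), x u T') ≤ α/4) :
    ∃ S : Fin n → Finset (Fin k), PartlyFeasible w π S ∧
      (∑ v, ∑ T ∈ F, b v T * x v T) / (2*α) ≤ ∑ v, b v (S v) := by
  classical
  have hα0 : (0:ℝ) < α := lt_of_lt_of_le one_pos hα
  set p : Fin n → Finset (Fin k) → ℝ := fun v T =>
    if T ∈ F then x v T / α
    else if T = ∅ then 1 - (∑ T' ∈ F, x v T') / α else 0 with hp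
  have hsumF : ∀ v, ∑ T' ∈ F, x v T' ≤ 1 := by
    intro v
    refine le_trans (Finset.sum_le_sum_of_subset_of_nonneg (Finset.subset_univ F)
      (fun T' _ _ => hx0 v T')) (hx1 v)
  have hp0 : ∀ v T, 0 ≤ p v T := by
    intro v T
    simp only [hp]
    split
    · exact div_nonneg (hx0 v T) (le_of_lt hα0)
    · split
      · have h1 := hsumF v
        have h2 : (∑ T' ∈ F, x v T') / α ≤ 1 := by
          rw [div_le_one hα0]
          linarith
        linarith
      · exact le_refl 0
  have hp1 : ∀ v, ∑ T, p v T = 1 := by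
    intro v
    rw [← Finset.sum_filter_add_sum_filter_not univ (· ∈ F) (p v)]
    have e1 : univ.filter (· ∈ F) = F := Finset.filter_univ_mem F
    have e2 : ∑ T ∈ univ.filter (· ∈ F), p v T = (∑ T' ∈ F, x v T') / α := by
      rw [e1, Finset.sum_div]
      refine Finset.sum_congr rfl (fun T hT => ?_)
      simp only [hp, hT, if_true]
    have e3 : ∑ T ∈ univ.filter (fun T => ¬ T ∈ F), p v T = 1 - (∑ T' ∈ F, x v T') / α := by
      have h4 : ∑ T ∈ univ.filter (fun T => ¬ T ∈ F), p v T = p v ∅ := by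
        refine Finset.sum_eq_single_of_mem (∅ : Finset (Fin k))
          (Finset.mem_filter.2 ⟨Finset.mem_univ _, hF⟩) ?_
        intro T hT hne
        have hTF : T ∉ F := (Finset.mem_filter.1 hT).2
        simp only [hp, hTF, if_false, hne, if_false]
      rw [h4]
      simp only [hp, hF, if_false, if_true]
    rw [e2, e3]
    ring
  set keep : (Fin n → Finset (Fin k)) → Fin n → Prop := fun f v =>
    ∑ u ∈ univ.filter (fun u => π u < π v ∧ (f u ∩ f v).Nonempty), wbar w u v < 1/2
    with hkeepdef
  set Sf : (Fin n → Finset (Fin k)) → Fin n → Finset (Fin k) :=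
    fun f v => if keep f v then f v else ∅ with hSfdef
  have hpartly : ∀ f, PartlyFeasible w π (Sf f) := by
    intro f v
    by_cases h : keep f v
    · have e : Sf f v = f v := if_pos h
      refine lt_of_le_of_lt ?_ h
      refine Finset.sum_le_sum_of_subset_of_nonneg ?_
        (fun u _ _ => wbar_nonneg hw u v)
      intro u hu
      rw [Finset.mem_filter] at hu ⊢
      obtain ⟨-, h1, h2⟩ := hu
      refine ⟨Finset.mem_univ u, h1, ?_⟩
      obtain ⟨j, hj⟩ := h2
      rw [Finset.mem_inter] at hj
      have hju : j ∈ f u := by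
        by_cases hku : keep f u
        · have : Sf f u = f u := if_pos hku
          rw [this] at hj
          exact hj.1
        · have : Sf f u = ∅ := if_neg hku
          rw [this] at hj
          exact absurd hj.1 (Finset.notMem_empty j)
      have hjv : j ∈ f v := by
        rw [e] at hj
        exact hj.2
      exact ⟨j, Finset.mem_inter.2 ⟨hju, hjv⟩⟩
    · have e : Sf f v = ∅ := if_neg h
      have he : univ.filter (fun u => π u < π v ∧ (Sf f u ∩ Sf f v).Nonempty) = ∅ := by
        refine Finset.filter_eq_empty_iff.2 (fun u _ => ?_)
        rintro ⟨-, h2⟩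
        rw [e, Finset.inter_empty] at h2
        exact Finset.not_nonempty_empty h2
      rw [he, Finset.sum_empty]
      norm_num
  set μ : (Fin n → Finset (Fin k)) → ℝ := fun f => ∏ v, p v (f v) with hμdef
  have hμ0 : ∀ f, 0 ≤ μ f := fun f => Finset.prod_nonneg (fun v _ => hp0 v (f v))
  have hμ1 : ∑ f, μ f = 1 := by
    rw [show (∑ f, μ f) = ∑ f : Fin n → Finset (Fin k), ∏ v, p v (f v) from rfl]
    rw [pi_sum_prod p]
    rw [Finset.prod_congr rfl (fun v _ => hp1 v), Finset.prod_const_one]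
  -- the per-vertex estimate
  have key : ∀ v : Fin n, ∑ T ∈ F, b v T * (p v T / 2)
      ≤ ∑ f : Fin n → Finset (Fin k), μ f * b v (Sf f v) := by
    intro v
    have hfib : ∑ f : Fin n → Finset (Fin k), μ f * b v (Sf f v)
        = ∑ T : Finset (Fin k), ∑ f ∈ univ.filter (fun f => f v = T),
            μ f * b v (Sf f v) :=
      (Finset.sum_fiberwise univ (fun f => f v) (fun f => μ f * b v (Sf f v))).symm
    rw [hfib]
    refine le_trans (Finset.sum_le_sum ?_)
      (Finset.sum_le_sum_of_subset_of_nonneg (Finset.subset_univ F)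
        (fun T _ _ => Finset.sum_nonneg (fun f _ => mul_nonneg (hμ0 f) (hb v _))))
    intro T hT
    -- per-set estimate
    set keepT : (Fin n → Finset (Fin k)) → Prop := fun f =>
      ∑ u ∈ univ.filter (fun u => π u < π v ∧ (f u ∩ T).Nonempty), wbar w u v < 1/2
      with hkeepTdef
    have hkeepiff : ∀ f : Fin n → Finset (Fin k), f v = T → (keep f v ↔ keepT f) := by
      intro f hfv
      simp only [hkeepdef, hkeepTdef, hfv]
    have hterm : ∀ f ∈ univ.filter (fun f : Fin n → Finset (Fin k) => f v = T),
        μ f * b v (Sf f v) = b v T * (μ f * (if keepT f then 1 else 0)) := by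
      intro f hf
      have hfv : f v = T := (Finset.mem_filter.1 hf).2
      by_cases hk : keepT f
      · have hk2 : keep f v := (hkeepiff f hfv).2 hk
        rw [show Sf f v = f v from if_pos hk2, hfv, if_pos hk]
        ring
      · have hk2 : ¬ keep f v := fun h => hk ((hkeepiff f hfv).1 h)
        rw [show Sf f v = ∅ from if_neg hk2, hb0 v, if_neg hk]
        ring
    rw [Finset.sum_congr rfl hterm, ← Finset.mul_sum]
    refine mul_le_mul_of_nonneg_left ?_ (hb v T)
    -- claim : p v T / 2 ≤ ∑ f in fiber, μ f * ind keepT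
    have hsplit : ∑ f ∈ univ.filter (fun f : Fin n → Finset (Fin k) => f v = T),
          μ f * (if keepT f then 1 else 0)
        = (∑ f ∈ univ.filter (fun f : Fin n → Finset (Fin k) => f v = T), μ f)
          - (∑ f ∈ univ.filter (fun f : Fin n → Finset (Fin k) => f v = T),
              μ f * (if keepT f then 0 else 1)) := by
      rw [← Finset.sum_sub_distrib]
      refine Finset.sum_congr rfl (fun f _ => ?_)
      by_cases hk : keepT f <;> simp [hk]
    have hA : ∑ f ∈ univ.filter (fun f : Fin n → Finset (Fin k) => f v = T), μ f
        = p v T := by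
      have h1 : ∑ f ∈ univ.filter (fun f : Fin n → Finset (Fin k) => f v = T), μ f
          = ∑ f : Fin n → Finset (Fin k), μ f * (if f v = T then 1 else 0) := by
        rw [Finset.sum_filter]
        refine Finset.sum_congr rfl (fun f _ => ?_)
        by_cases hfv : f v = T <;> simp [hfv]
      rw [h1]
      have h2 := esingle p hp1 v (fun d => if d = T then 1 else 0)
      simp only [hμdef]
      rw [h2]
      refine (Finset.sum_eq_single_of_mem T (Finset.mem_univ T)
        (fun d _ hne => by rw [if_neg hne, mul_zero])).trans (by rw [if_pos rfl, mul_one])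
    have hbad0 : ∀ (u : Fin n) (e : Finset (Fin k)),
        0 ≤ (if (e ∩ T).Nonempty then wbar w u v else 0) := by
      intro u e
      split
      · exact wbar_nonneg hw u v
      · exact le_refl 0
    set bad : (Fin n → Finset (Fin k)) → ℝ := fun f =>
      ∑ u ∈ univ.filter (fun u => π u < π v),
        (if (f u ∩ T).Nonempty then wbar w u v else 0) with hbaddef
    have hbadnn : ∀ f, 0 ≤ bad f :=
      fun f => Finset.sum_nonneg (fun u _ => hbad0 u (f u))
    have hbadkeep : ∀ f, ¬ keepT f → 1/2 ≤ bad f := by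
      intro f hk
      simp only [hkeepTdef] at hk
      push_neg at hk
      refine le_trans hk ?_
      simp only [hbaddef]
      rw [show (univ.filter (fun u => π u < π v ∧ (f u ∩ T).Nonempty))
          = (univ.filter (fun u => π u < π v)).filter (fun u => (f u ∩ T).Nonempty) by
        rw [Finset.filter_filter]]
      rw [Finset.sum_filter]
    have h3 : ∑ f ∈ univ.filter (fun f : Fin n → Finset (Fin k) => f v = T),
          μ f * (if keepT f then 0 else 1)
        ≤ ∑ f : Fin n → Finset (Fin k),
            μ f * ((if (f v : Finset (Fin k)) = T then 1 else 0) * (2 * bad f)) := by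
      rw [Finset.sum_filter]
      refine Finset.sum_le_sum (fun f _ => ?_)
      by_cases hfv : f v = T
      · rw [if_pos hfv, if_pos hfv, one_mul]
        by_cases hk : keepT f
        · rw [if_pos hk, mul_zero]
          exact mul_nonneg (hμ0 f) (by linarith [hbadnn f])
        · rw [if_neg hk, mul_one]
          nlinarith [hμ0 f, hbadkeep f hk]
      · rw [if_neg hfv, if_neg hfv, zero_mul, mul_zero]
    have h4 : ∑ f : Fin n → Finset (Fin k),
          μ f * ((if (f v : Finset (Fin k)) = T then 1 else 0) * (2 * bad f))
        = 2 * ∑ u ∈ univ.filter (fun u => π u < π v),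
            (wbar w u v * (∑ T' ∈ F.filter (fun T' => (T' ∩ T).Nonempty), x u T') / α)
              * p v T := by
      have e1 : ∀ f : Fin n → Finset (Fin k),
          μ f * ((if (f v : Finset (Fin k)) = T then 1 else 0) * (2 * bad f))
            = 2 * ∑ u ∈ univ.filter (fun u => π u < π v),
                μ f * ((if (f u ∩ T).Nonempty then wbar w u v else 0)
                  * (if (f v : Finset (Fin k)) = T then 1 else 0)) := by
        intro f
        simp only [hbaddef, Finset.mul_sum]
        refine Finset.sum_congr rfl (fun u _ => by ring)
      rw [Finset.sum_congr rfl (fun f _ => e1 f), ← Finset.mul_sum, Finset.sum_comm]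
      refine congrArg (fun z => 2 * z) ?_
      refine Finset.sum_congr rfl (fun u hu => ?_)
      have hult : π u < π v := (Finset.mem_filter.1 hu).2
      have huv : u ≠ v := fun h => absurd (h ▸ hult) (lt_irrefl _)
      have hpair := epair p hp1 u v huv
        (fun e => if (e ∩ T).Nonempty then wbar w u v else 0)
        (fun e => if e = T then 1 else 0)
      simp only [hμdef]
      rw [hpair]
      have hrT : ∑ e : Finset (Fin k), p v e * (if e = T then 1 else 0) = p v T :=
        (Finset.sum_eq_single_of_mem T (Finset.mem_univ T)
          (fun d _ hne => by rw [if_neg hne, mul_zero])).trans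
          (by rw [if_pos rfl, mul_one])
      have hrU : ∑ e : Finset (Fin k),
            p u e * (if (e ∩ T).Nonempty then wbar w u v else 0)
          = wbar w u v * (∑ T' ∈ F.filter (fun T' => (T' ∩ T).Nonempty), x u T') / α := by
        have s1 : ∑ e : Finset (Fin k),
              p u e * (if (e ∩ T).Nonempty then wbar w u v else 0)
            = ∑ e ∈ univ.filter (fun e : Finset (Fin k) => (e ∩ T).Nonempty),
                p u e * wbar w u v := by
          rw [Finset.sum_filter]
          refine Finset.sum_congr rfl (fun e _ => ?_)
          by_cases he : (e ∩ T).Nonempty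
          · rw [if_pos he, if_pos he]
          · rw [if_neg he, if_neg he, mul_zero]
        rw [s1, ← Finset.sum_mul]
        have s2 : ∑ e ∈ univ.filter (fun e : Finset (Fin k) => (e ∩ T).Nonempty), p u e
            = (∑ T' ∈ F.filter (fun T' => (T' ∩ T).Nonempty), x u T') / α := by
          have s3 : ∑ e ∈ univ.filter (fun e : Finset (Fin k) => (e ∩ T).Nonempty), p u e
              = ∑ e ∈ univ.filter (fun e : Finset (Fin k) => (e ∩ T).Nonempty),
                  (if e ∈ F then x u e / α else 0) := by
            refine Finset.sum_congr rfl (fun e he => ?_)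
            have hsh : (e ∩ T).Nonempty := (Finset.mem_filter.1 he).2
            by_cases heF : e ∈ F
            · simp only [hp, heF, if_true]
            · have hne : e ≠ ∅ := by
                obtain ⟨j, hj⟩ := hsh
                exact Finset.ne_empty_of_mem (Finset.mem_inter.1 hj).1
              simp only [hp, heF, if_false, hne]
          rw [s3, ← Finset.sum_filter]
          have s4 : (univ.filter (fun e : Finset (Fin k) => (e ∩ T).Nonempty)).filter
                (fun e => e ∈ F)
              = F.filter (fun T' => (T' ∩ T).Nonempty) := by
            ext e
            simp only [Finset.mem_filter, Finset.mem_univ, true_and]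
            tauto
          rw [s4, Finset.sum_div]
        rw [s2]
        ring
      rw [hrT, hrU]
    -- combine
    have hfinal : p v T / 2
        ≤ ∑ f ∈ univ.filter (fun f : Fin n → Finset (Fin k) => f v = T),
            μ f * (if keepT f then 1 else 0) := by
      rw [hsplit, hA]
      have hB : ∑ f ∈ univ.filter (fun f : Fin n → Finset (Fin k) => f v = T),
            μ f * (if keepT f then 0 else 1) ≤ p v T / 2 := by
        refine le_trans (h3.trans (le_of_eq h4)) ?_
        have h6 : ∑ u ∈ univ.filter (fun u => π u < π v),
              (wbar w u v * (∑ T' ∈ F.filter (fun T' => (T' ∩ T).Nonempty), x u T') / α)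
                * p v T
            = (∑ u ∈ univ.filter (fun u => π u < π v),
                wbar w u v * (∑ T' ∈ F.filter (fun T' => (T' ∩ T).Nonempty), x u T'))
              * (p v T / α) := by
          rw [Finset.sum_mul]
          refine Finset.sum_congr rfl (fun u _ => by ring)
        rw [h6]
        have h7 : (∑ u ∈ univ.filter (fun u => π u < π v),
              wbar w u v * (∑ T' ∈ F.filter (fun T' => (T' ∩ T).Nonempty), x u T'))
              * (p v T / α) ≤ (α/4) * (p v T / α) :=
          mul_le_mul_of_nonneg_right (hbound v T hT)
            (div_nonneg (hp0 v T) (le_of_lt hα0))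
        have h8 : (α/4) * (p v T / α) = p v T / 4 := by
          field_simp
        rw [h8] at h7
        linarith
      linarith
    exact hfinal
  -- assemble: compare the expected value with the maximum
  have Etotal : ∑ v, ∑ T ∈ F, b v T * (p v T / 2)
      ≤ ∑ f : Fin n → Finset (Fin k), μ f * (∑ v, b v (Sf f v)) := by
    have h1 : ∑ f : Fin n → Finset (Fin k), μ f * (∑ v, b v (Sf f v))
        = ∑ v, ∑ f : Fin n → Finset (Fin k), μ f * b v (Sf f v) := by
      simp_rw [Finset.mul_sum]
      rw [Finset.sum_comm]
    rw [h1]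
    exact Finset.sum_le_sum (fun v _ => key v)
  have hlhs : ∑ v, ∑ T ∈ F, b v T * (p v T / 2)
      = (∑ v, ∑ T ∈ F, b v T * x v T) / (2*α) := by
    rw [Finset.sum_div]
    refine Finset.sum_congr rfl (fun v _ => ?_)
    rw [Finset.sum_div]
    refine Finset.sum_congr rfl (fun T hT => ?_)
    have : p v T = x v T / α := by simp only [hp, hT, if_true]
    rw [this]
    ring
  by_contra hcon
  push_neg at hcon
  have hval : ∀ f : Fin n → Finset (Fin k), ∑ v, b v (Sf f v)
      < (∑ v, ∑ T ∈ F, b v T * x v T) / (2*α) :=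
    fun f => hcon (Sf f) (hpartly f)
  have hex : ∃ f₀ : Fin n → Finset (Fin k), 0 < μ f₀ := by
    by_contra h
    push_neg at h
    have hz : ∑ f : Fin n → Finset (Fin k), μ f = 0 :=
      le_antisymm (Finset.sum_nonpos (fun f _ => h f))
        (Finset.sum_nonneg (fun f _ => hμ0 f))
    rw [hμ1] at hz
    norm_num at hz
  obtain ⟨f₀, hf₀⟩ := hex
  have hstrict : ∑ f : Fin n → Finset (Fin k), μ f * (∑ v, b v (Sf f v))
      < ∑ f : Fin n → Finset (Fin k),
          μ f * ((∑ v, ∑ T ∈ F, b v T * x v T) / (2*α)) :=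
    Finset.sum_lt_sum
      (fun f _ => mul_le_mul_of_nonneg_left (le_of_lt (hval f)) (hμ0 f))
      ⟨f₀, Finset.mem_univ f₀, mul_lt_mul_of_pos_left (hval f₀) hf₀⟩
  have hconst : ∑ f : Fin n → Finset (Fin k),
        μ f * ((∑ v, ∑ T ∈ F, b v T * x v T) / (2*α))
      = (∑ v, ∑ T ∈ F, b v T * x v T) / (2*α) := by
    rw [← Finset.sum_mul, hμ1, one_mul]
  rw [hconst] at hstrict
  rw [hlhs] at Etotal
  linarith

/-- combined guarantee for weighted conflict graphs: there is a
feasible allocation of value at least `b* / (16 √k ρ ⌈log₂ n⌉)`.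
(`Nat.clog 2 n = ⌈log₂ n⌉`.) -/
theorem exists_feasible_alloc_of_weighted_lp_solution {n k : ℕ} (hn : 2 ≤ n)
    (hk : 1 ≤ k)
    (w : Fin n → Fin n → ℝ) (hw : ∀ u v, 0 ≤ w u v) (hw0 : ∀ v, w v v = 0)
    (π : Equiv.Perm (Fin n)) (ρ : ℝ) (hρ : 1 ≤ ρ)
    (hind : WIndIndepAtMost w π ρ)
    (b : Fin n → Finset (Fin k) → ℝ) (hb : ∀ v T, 0 ≤ b v T)
    (hb0 : ∀ v, b v ∅ = 0)
    (x : Fin n → Finset (Fin k) → ℝ) (hx : WIsLPSol w π ρ x) :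
    ∃ S : Fin n → Finset (Fin k), WFeasibleAlloc w S ∧
      (∑ v : Fin n, ∑ T : Finset (Fin k), b v T * x v T)
          / (16 * Real.sqrt k * ρ * (Nat.clog 2 n : ℝ))
        ≤ ∑ v : Fin n, b v (S v) := by
  classical
  obtain ⟨hx0, hx2, hx1⟩ := hx
  have hk0 : (0:ℝ) < k := by exact_mod_cast hk
  have hsq1 : (1:ℝ) ≤ Real.sqrt k := Real.one_le_sqrt.2 (by exact_mod_cast hk)
  have hsq0 : (0:ℝ) < Real.sqrt k := lt_of_lt_of_le one_pos hsq1
  have hρ0 : (0:ℝ) < ρ := lt_of_lt_of_le one_pos hρ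
  set α : ℝ := 4 * Real.sqrt k * ρ with hαdef
  have hα : 1 ≤ α := by nlinarith
  have hα0 : (0:ℝ) < α := lt_of_lt_of_le one_pos hα
  -- the LP constraint, summed over channels of a set
  -- key per-channel bound reformulated
  have hLP : ∀ (v : Fin n) (j : Fin k),
      ∑ u ∈ univ.filter (fun u => π u < π v),
        wbar w u v * (∑ T' ∈ univ.filter (fun T' : Finset (Fin k) => j ∈ T'), x u T')
        ≤ ρ := by
    intro v j
    have := hx2 v j
    refine le_trans (le_of_eq ?_) this
    refine Finset.sum_congr rfl (fun u _ => ?_)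
    rw [Finset.mul_sum]
  have hwbnn : ∀ u v : Fin n, 0 ≤ wbar w u v :=
    fun u v => add_nonneg (hw u v) (hw v u)
  -- families of small and large sets
  set Fs : Finset (Finset (Fin k)) :=
    univ.filter (fun T : Finset (Fin k) => T.Nonempty ∧ T.card^2 ≤ k) with hFsdef
  set Fl : Finset (Finset (Fin k)) :=
    univ.filter (fun T : Finset (Fin k) => k < T.card^2) with hFldef
  have hFs0 : ∅ ∉ Fs := by
    simp only [hFsdef, Finset.mem_filter]
    rintro ⟨-, h, -⟩
    exact Finset.not_nonempty_empty h
  have hFl0 : ∅ ∉ Fl := by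
    simp only [hFldef, Finset.mem_filter, Finset.card_empty]
    rintro ⟨-, h⟩
    omega
  -- splitting the LP value
  have hsplitsum : (∑ v : Fin n, ∑ T : Finset (Fin k), b v T * x v T)
      = (∑ v : Fin n, ∑ T ∈ Fs, b v T * x v T)
        + (∑ v : Fin n, ∑ T ∈ Fl, b v T * x v T) := by
    rw [← Finset.sum_add_distrib]
    refine Finset.sum_congr rfl (fun v _ => ?_)
    rw [← Finset.sum_filter_add_sum_filter_not univ
      (fun T : Finset (Fin k) => T.Nonempty ∧ T.card^2 ≤ k) (fun T => b v T * x v T)]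
    refine congrArg (fun z => _ + z) ?_
    have hset : univ.filter (fun T : Finset (Fin k) =>
        ¬ (T.Nonempty ∧ T.card^2 ≤ k)) = insert ∅ Fl := by
      ext T
      simp only [Finset.mem_filter, Finset.mem_univ, true_and, Finset.mem_insert,
        hFldef]
      constructor
      · intro h
        rw [not_and_or] at h
        rcases h with h | h
        · exact Or.inl (Finset.not_nonempty_iff_eq_empty.1 h)
        · exact Or.inr (by omega)
      · rintro (rfl | h)
        · rintro ⟨h1, -⟩
          exact Finset.not_nonempty_empty h1
        · rintro ⟨-, h2⟩
          omega
    rw [hset, Finset.sum_insert hFl0, hb0 v, zero_mul, zero_add]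
  -- the channel-sum identity used in both cases
  have hchan : ∀ (u : Fin n) (s : Finset (Fin k)),
      ∑ j ∈ s, ∑ T' ∈ univ.filter (fun T' : Finset (Fin k) => j ∈ T'), x u T'
        = ∑ T' : Finset (Fin k), ((s ∩ T').card : ℝ) * x u T' := by
    intro u s
    have r1 : ∀ j, ∑ T' ∈ univ.filter (fun T' : Finset (Fin k) => j ∈ T'), x u T'
        = ∑ T' : Finset (Fin k), (if j ∈ T' then x u T' else 0) :=
      fun j => Finset.sum_filter _ _
    rw [Finset.sum_congr rfl (fun j _ => r1 j), Finset.sum_comm]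
    refine Finset.sum_congr rfl (fun T' _ => ?_)
    rw [← Finset.sum_filter, Finset.filter_mem_eq_inter, Finset.sum_const,
      nsmul_eq_mul]
  -- small-set bound
  have hbs : ∀ v : Fin n, ∀ T ∈ Fs,
      ∑ u ∈ univ.filter (fun u => π u < π v), wbar w u v *
        (∑ T' ∈ Fs.filter (fun T' => (T' ∩ T).Nonempty), x u T') ≤ α/4 := by
    intro v T hT
    have hTprop : T.Nonempty ∧ T.card^2 ≤ k := by
      have := Finset.mem_filter.1 hT
      exact this.2
    have stepA : ∀ u : Fin n,
        (∑ T' ∈ Fs.filter (fun T' => (T' ∩ T).Nonempty), x u T')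
        ≤ ∑ j ∈ T, ∑ T' ∈ univ.filter (fun T' : Finset (Fin k) => j ∈ T'), x u T' := by
      intro u
      rw [hchan u T]
      have r2 : ∑ T' ∈ Fs.filter (fun T' => (T' ∩ T).Nonempty), x u T'
          = ∑ T' : Finset (Fin k),
              (if (T'.Nonempty ∧ T'.card^2 ≤ k) ∧ (T' ∩ T).Nonempty
                then x u T' else 0) := by
        rw [hFsdef, Finset.filter_filter, Finset.sum_filter]
      rw [r2]
      refine Finset.sum_le_sum (fun T' _ => ?_)
      by_cases hc : (T'.Nonempty ∧ T'.card^2 ≤ k) ∧ (T' ∩ T).Nonempty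
      · rw [if_pos hc]
        obtain ⟨j₀, hj₀⟩ := hc.2
        rw [Finset.mem_inter] at hj₀
        have h1 : 1 ≤ (T ∩ T').card := by
          refine Finset.card_pos.2 ⟨j₀, ?_⟩
          exact Finset.mem_inter.2 ⟨hj₀.2, hj₀.1⟩
        have h2 : (1:ℝ) ≤ ((T ∩ T').card : ℝ) := by exact_mod_cast h1
        nlinarith [hx0 u T']
      · rw [if_neg hc]
        exact mul_nonneg (Nat.cast_nonneg _) (hx0 u T')
    calc ∑ u ∈ univ.filter (fun u => π u < π v), wbar w u v *
          (∑ T' ∈ Fs.filter (fun T' => (T' ∩ T).Nonempty), x u T')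
        ≤ ∑ u ∈ univ.filter (fun u => π u < π v), wbar w u v *
            (∑ j ∈ T, ∑ T' ∈ univ.filter (fun T' : Finset (Fin k) => j ∈ T'), x u T') :=
          Finset.sum_le_sum (fun u _ =>
            mul_le_mul_of_nonneg_left (stepA u) (hwbnn u v))
      _ = ∑ j ∈ T, ∑ u ∈ univ.filter (fun u => π u < π v), wbar w u v *
            (∑ T' ∈ univ.filter (fun T' : Finset (Fin k) => j ∈ T'), x u T') := by
          simp_rw [Finset.mul_sum]
          rw [Finset.sum_comm]
      _ ≤ ∑ j ∈ T, ρ := Finset.sum_le_sum (fun j _ => hLP v j)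
      _ = (T.card : ℝ) * ρ := by rw [Finset.sum_const, nsmul_eq_mul]
      _ ≤ Real.sqrt k * ρ := by
          refine mul_le_mul_of_nonneg_right ?_ (le_of_lt hρ0)
          have h1 : ((T.card : ℝ))^2 ≤ (k : ℝ) := by exact_mod_cast hTprop.2
          have h2 : Real.sqrt (((T.card : ℝ))^2) ≤ Real.sqrt k :=
            Real.sqrt_le_sqrt h1
          rwa [Real.sqrt_sq (Nat.cast_nonneg _)] at h2
      _ = α/4 := by rw [hαdef]; ring
  -- large-set bound
  have hbl : ∀ v : Fin n, ∀ T ∈ Fl,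
      ∑ u ∈ univ.filter (fun u => π u < π v), wbar w u v *
        (∑ T' ∈ Fl.filter (fun T' => (T' ∩ T).Nonempty), x u T') ≤ α/4 := by
    intro v T hT
    have stepA : ∀ u : Fin n,
        (∑ T' ∈ Fl.filter (fun T' => (T' ∩ T).Nonempty), x u T')
        ≤ (Real.sqrt k)⁻¹ *
            ∑ j : Fin k, ∑ T' ∈ univ.filter (fun T' : Finset (Fin k) => j ∈ T'), x u T' := by
      intro u
      rw [hchan u univ]
      have r2 : ∑ T' ∈ Fl.filter (fun T' => (T' ∩ T).Nonempty), x u T'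
          = ∑ T' : Finset (Fin k),
              (if k < T'.card^2 ∧ (T' ∩ T).Nonempty then x u T' else 0) := by
        rw [hFldef, Finset.filter_filter, Finset.sum_filter]
      rw [r2, Finset.mul_sum]
      refine Finset.sum_le_sum (fun T' _ => ?_)
      have hTT : univ ∩ T' = T' := Finset.univ_inter T'
      rw [hTT]
      by_cases hc : k < T'.card^2 ∧ (T' ∩ T).Nonempty
      · rw [if_pos hc]
        have h1 : (k:ℝ) ≤ ((T'.card : ℝ))^2 := by
          have := hc.1
          exact_mod_cast le_of_lt this
        have h2 : Real.sqrt k ≤ (T'.card : ℝ) := by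
          have := Real.sqrt_le_sqrt h1
          rwa [Real.sqrt_sq (Nat.cast_nonneg _)] at this
        rw [show (Real.sqrt k)⁻¹ * (((T'.card:ℝ)) * x u T')
            = ((T'.card:ℝ) / Real.sqrt k) * x u T' by ring]
        have h3 : (1:ℝ) ≤ (T'.card:ℝ) / Real.sqrt k := by
          rw [le_div_iff₀ hsq0]
          linarith
        nlinarith [hx0 u T']
      · rw [if_neg hc]
        have := hx0 u T'
        positivity
    calc ∑ u ∈ univ.filter (fun u => π u < π v), wbar w u v *
          (∑ T' ∈ Fl.filter (fun T' => (T' ∩ T).Nonempty), x u T')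
        ≤ ∑ u ∈ univ.filter (fun u => π u < π v), wbar w u v *
            ((Real.sqrt k)⁻¹ * ∑ j : Fin k,
              ∑ T' ∈ univ.filter (fun T' : Finset (Fin k) => j ∈ T'), x u T') :=
          Finset.sum_le_sum (fun u _ =>
            mul_le_mul_of_nonneg_left (stepA u) (hwbnn u v))
      _ = (Real.sqrt k)⁻¹ * ∑ j : Fin k,
            ∑ u ∈ univ.filter (fun u => π u < π v), wbar w u v *
              (∑ T' ∈ univ.filter (fun T' : Finset (Fin k) => j ∈ T'), x u T') := by
          rw [Finset.mul_sum]
          simp_rw [Finset.mul_sum]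
          rw [Finset.sum_comm]
          refine Finset.sum_congr rfl (fun u _ => ?_)
          refine Finset.sum_congr rfl (fun j _ => ?_)
          refine Finset.sum_congr rfl (fun T' _ => ?_)
          ring
      _ ≤ (Real.sqrt k)⁻¹ * ∑ j : Fin k, ρ := by
          refine mul_le_mul_of_nonneg_left ?_ (by positivity)
          exact Finset.sum_le_sum (fun j _ => hLP v j)
      _ = (Real.sqrt k)⁻¹ * ((k:ℝ) * ρ) := by
          rw [Finset.sum_const, Finset.card_univ, Fintype.card_fin, nsmul_eq_mul]
      _ = α/4 := by
          rw [hαdef]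
          have hkk : Real.sqrt k * Real.sqrt k = (k:ℝ) := Real.mul_self_sqrt (le_of_lt hk0)
          field_simp
          nlinarith [hkk]
  -- choose the better family
  have hmain : ∀ (F : Finset (Finset (Fin k))), ∅ ∉ F →
      (∀ v : Fin n, ∀ T ∈ F,
        ∑ u ∈ univ.filter (fun u => π u < π v), wbar w u v *
          (∑ T' ∈ F.filter (fun T' => (T' ∩ T).Nonempty), x u T') ≤ α/4) →
      (∑ v : Fin n, ∑ T : Finset (Fin k), b v T * x v T)
        ≤ 2 * (∑ v : Fin n, ∑ T ∈ F, b v T * x v T) →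
      ∃ S : Fin n → Finset (Fin k), WFeasibleAlloc w S ∧
        (∑ v : Fin n, ∑ T : Finset (Fin k), b v T * x v T)
            / (16 * Real.sqrt k * ρ * (Nat.clog 2 n : ℝ))
          ≤ ∑ v : Fin n, b v (S v) := by
    intro F hF0 hFbound htot
    obtain ⟨S, hSpartly, hSval⟩ :=
      round_exists w hw π b hb hb0 x hx0 hx1 F hF0 α hα hFbound
    obtain ⟨S', hS'feas, hS'val⟩ := decompose hn w hw hw0 π b hb hb0 S hSpartly
    refine ⟨S', hS'feas, ?_⟩
    set L : ℝ := (Nat.clog 2 n : ℝ) with hLdef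
    have hL0 : (0:ℝ) < L := by
      have := Nat.clog_pos one_lt_two hn
      rw [hLdef]
      exact_mod_cast this
    have hden : 16 * Real.sqrt k * ρ * L = (4*α) * L := by rw [hαdef]; ring
    rw [hden, ← div_div]
    have hstep1 : (∑ v : Fin n, ∑ T : Finset (Fin k), b v T * x v T) / (4*α)
        ≤ (∑ v : Fin n, ∑ T ∈ F, b v T * x v T) / (2*α) := by
      rw [div_le_div_iff₀ (by positivity) (by positivity)]
      nlinarith [htot, hα0]
    have hstep2 : (∑ v : Fin n, ∑ T : Finset (Fin k), b v T * x v T) / (4*α)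
        ≤ ∑ v, b v (S v) := le_trans hstep1 hSval
    refine le_trans ?_ hS'val
    exact (div_le_div_iff_of_pos_right hL0).2 hstep2
  rcases le_total (∑ v : Fin n, ∑ T ∈ Fl, b v T * x v T)
      (∑ v : Fin n, ∑ T ∈ Fs, b v T * x v T) with hc | hc
  · exact hmain Fs hFs0 hbs (by linarith [hsplitsum])
  · exact hmain Fl hFl0 hbl (by linarith [hsplitsum])
end
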